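/- arXiv:1101.2765 — 6 statements merged into one kernel-verified Lean document; each statement's English description precedes it below -/
import Mathlib

section
/- Let G be a bridgeless connected graph of diameter 2. Then either G is 2-connected, or G has exactly one cut vertex v; moreover, in the latter case v is adjacent to every other vertex of G (so v is a center of G and G has radius 1). -/
open SimpleGraph

/-- `G` is rainbow connected with `n` colors: there exists an `n`-edge-coloring such that
any two distinct vertices are joined by a path whose edges receive pairwise distinct colors. -/
def SimpleGraph.RainbowConnected {V : Type*} (G : SimpleGraph V) (n : ℕ) : Prop :=
  ∃ c : Sym2 V → Fin n, ∀ u v : V, u ≠ v →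
    ∃ p : G.Walk u v, p.IsPath ∧ (p.edges.map c).Nodup

/-- The rainbow connection number of `G`: the least `n` for which `G` is rainbow
connected with `n` colors. -/
noncomputable def SimpleGraph.rc {V : Type*} (G : SimpleGraph V) : ℕ :=
  sInf {n | G.RainbowConnected n}

/-- A vertex `v` of a connected graph `G` is a cut vertex if deleting it
disconnects the graph. -/
def SimpleGraph.IsCutVertex {V : Type*} (G : SimpleGraph V) (v : V) : Prop :=
  G.Connected ∧ ¬(G.induce ({v}ᶜ : Set V)).Connected

/-- A graph on at least `3` vertices is `2`-connected if it is connected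
and has no cut vertex. -/
def SimpleGraph.TwoConnected {V : Type*} [Fintype V] (G : SimpleGraph V) : Prop :=
  3 ≤ Fintype.card V ∧ G.Connected ∧ ∀ v : V, ¬G.IsCutVertex v

lemma reach_of_walk' {V : Type*} {G : SimpleGraph V} {s : Set V} :
    ∀ {a b : V} (p : G.Walk a b) (h : ∀ x ∈ p.support, x ∈ s),
    (G.induce s).Reachable ⟨a, h a p.start_mem_support⟩ ⟨b, h b p.end_mem_support⟩ := by
  intro a b p
  induction p with
  | nil => intro h; rfl
  | cons hadj q ih =>
      intro h
      have h' : ∀ x ∈ q.support, x ∈ s := fun x hx => h x (by simp [Walk.support_cons, hx])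
      refine Reachable.trans (Adj.reachable ?_) (ih h')
      exact hadj

lemma mid_adj {V : Type*} {G : SimpleGraph V} {a b v : V} (p : G.Walk a b)
    (hlen : p.length ≤ 2) (ha : a ≠ v) (hb : b ≠ v) (hv : v ∈ p.support) :
    G.Adj a v ∧ G.Adj v b := by
  cases p with
  | nil => simp at hv; exact absurd hv.symm ha
  | cons h1 q =>
    cases q with
    | nil => simp at hv; rcases hv with h | h <;> simp_all
    | cons h2 r =>
      cases r with
      | nil =>
        simp only [Walk.support_cons, Walk.support_nil, List.mem_cons, List.mem_singleton] at hv
        rcases hv with h | h | h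
        · exact absurd h.symm ha
        · subst h; exact ⟨h1, h2⟩
        · simp at h; exact absurd h.symm hb
      | cons h3 r' => simp [Walk.length_cons] at hlen

lemma adj_pair {V : Type*} {G : SimpleGraph V} (hconn : G.Connected)
    (hdiam : G.diam = 2) {v : V} (a b : ↑({v}ᶜ : Set V))
    (hnr : ¬(G.induce ({v}ᶜ : Set V)).Reachable a b) :
    G.Adj ↑a v ∧ G.Adj v ↑b := by
  have hne : (a : V) ≠ b := by
    intro h
    exact hnr (by rw [Subtype.ext h])
  have hetop : G.ediam ≠ ⊤ := G.ediam_ne_top_of_diam_ne_zero (by omega)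
  have hd : G.dist ↑a ↑b ≤ 2 := hdiam ▸ G.dist_le_diam hetop
  obtain ⟨p, hp⟩ := hconn.exists_walk_length_eq_dist (a : V) (b : V)
  have hvs : v ∈ p.support := by
    by_contra hvs
    have h : ∀ x ∈ p.support, x ∈ ({v}ᶜ : Set V) := fun x hx hxv => hvs (hxv ▸ hx)
    have := reach_of_walk' p h
    simp only [Subtype.coe_eta] at this
    exact hnr this
  exact mid_adj p (hp ▸ hd) a.2 b.2 hvs

lemma cut_adj_all {V : Type*} [Fintype V] {G : SimpleGraph V} (hconn : G.Connected)
    (hdiam : G.diam = 2) {v : V} (hv : G.IsCutVertex v) :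
    ∀ w : V, w ≠ v → G.Adj v w := by
  have hnt : Nontrivial V := G.nontrivial_of_diam_ne_zero (by omega)
  obtain ⟨w₀, hw₀⟩ := exists_ne v
  haveI hne : Nonempty ↑({v}ᶜ : Set V) := ⟨⟨w₀, hw₀⟩⟩
  have hnp : ¬(G.induce ({v}ᶜ : Set V)).Preconnected := fun h => hv.2 (Connected.mk h)
  simp only [Preconnected, not_forall] at hnp
  obtain ⟨a, b, hab⟩ := hnp
  intro w hw
  set w' : ↑({v}ᶜ : Set V) := ⟨w, hw⟩ with hw'
  by_cases hr : (G.induce ({v}ᶜ : Set V)).Reachable a w'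
  · have h2 : ¬(G.induce ({v}ᶜ : Set V)).Reachable w' b := fun h => hab (hr.trans h)
    exact (adj_pair hconn hdiam w' b h2).1.symm
  · exact (adj_pair hconn hdiam a w' hr).2

lemma unique_cut {V : Type*} [Fintype V] {G : SimpleGraph V} (hconn : G.Connected)
    (hdiam : G.diam = 2) {v w : V} (hv : G.IsCutVertex v) (hw : G.IsCutVertex w) :
    w = v := by
  by_contra hne
  have hvadj := cut_adj_all hconn hdiam hv
  apply hw.2
  have hvm : v ∈ ({w}ᶜ : Set V) := fun h => hne (Set.mem_singleton_iff.mp h).symm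
  set v' : ↑({w}ᶜ : Set V) := ⟨v, hvm⟩ with hv'
  haveI : Nonempty ↑({w}ᶜ : Set V) := ⟨v'⟩
  have key : ∀ x : ↑({w}ᶜ : Set V), (G.induce ({w}ᶜ : Set V)).Reachable x v' := by
    intro x
    by_cases hx : (x : V) = v
    · exact (Subtype.ext hx : x = v') ▸ Reachable.refl x
    · exact Adj.reachable (by exact (hvadj x hx).symm)
  exact Connected.mk (fun x y => (key x).trans (key y).symm)

/-- A bridgeless connected graph of diameter `2` is either `2`-connected, or has a
unique cut vertex `v`, which is adjacent to every other vertex (so `v` is a center of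
`G` and `G` has radius `1`). -/
theorem twoConnected_or_unique_cutVertex {V : Type*} [Fintype V] (G : SimpleGraph V)
    (hconn : G.Connected) (hbridgeless : ∀ e : Sym2 V, ¬G.IsBridge e)
    (hdiam : G.diam = 2) :
    G.TwoConnected ∨
      ∃ v : V, (∀ w : V, G.IsCutVertex w ↔ w = v) ∧ ∀ w : V, w ≠ v → G.Adj v w := by
  have hnV : Nonempty V := hconn.nonempty
  by_cases hcut : ∃ v : V, G.IsCutVertex v
  · obtain ⟨v, hv⟩ := hcut
    right
    exact ⟨v, fun w => ⟨fun hw => unique_cut hconn hdiam hv hw, fun h => h ▸ hv⟩,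
      cut_adj_all hconn hdiam hv⟩
  · left
    refine ⟨?_, hconn, fun v hv => hcut ⟨v, hv⟩⟩
    obtain ⟨u, w, huw⟩ := G.exists_dist_eq_diam
    rw [hdiam] at huw
    obtain ⟨p, hp⟩ := hconn.exists_walk_length_eq_dist u w
    rw [huw] at hp
    have hm1 : G.Adj u (p.getVert 1) := by
      have := p.adj_getVert_succ (i := 0) (by omega)
      simpa using this
    have hm2 : G.Adj (p.getVert 1) w := by
      have := p.adj_getVert_succ (i := 1) (by omega)
      rw [show (1 : ℕ) + 1 = p.length from by omega, p.getVert_length] at this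
      exact this
    have huw' : u ≠ w := by
      intro h; subst h; simp [SimpleGraph.dist_self] at huw
    have := Fintype.two_lt_card_iff.mpr ⟨u, p.getVert 1, w, hm1.ne, huw', hm2.ne⟩
    omega
end

section
/- Let G be a bridgeless connected graph of diameter 2 that has a cut vertex. Then the rainbow connection number of G satisfies rc(G) ≤ 3. -/
open SimpleGraph

lemma reach_induce_aux {V : Type*} (G : SimpleGraph V) (x : V) :
    ∀ {a b : V} (p : G.Walk a b), (∀ y ∈ p.support, y ≠ x) →
      ∀ (ha : a ∈ ({x}ᶜ : Set V)) (hb : b ∈ ({x}ᶜ : Set V)),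
      (G.induce ({x}ᶜ : Set V)).Reachable ⟨a, ha⟩ ⟨b, hb⟩ := by
  intro a b p
  induction p with
  | nil => intro _ ha hb; rfl
  | @cons u v w h q ih =>
    intro hs ha hb
    have hv : v ≠ x := hs v (by simp [Walk.support_cons, Walk.start_mem_support])
    have h1 : (G.induce ({x}ᶜ : Set V)).Adj ⟨u, ha⟩ ⟨v, hv⟩ := by
      simpa using h
    exact h1.reachable.trans (ih (fun y hy => hs y (by simp [Walk.support_cons, hy])) hv hb)

/-- universal vertex step -/
lemma univ_adj_of_cut {V : Type*} [Fintype V] (G : SimpleGraph V) (hconn : G.Connected)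
    (hne : G.ediam ≠ ⊤) (hdiam : G.diam = 2) (x : V) (hx : G.IsCutVertex x) :
    ∀ u : V, u ≠ x → G.Adj u x := by
  classical
  obtain ⟨-, hxdis⟩ := hx
  have hnontriv : Nontrivial V := by
    refine G.nontrivial_of_ediam_ne_zero ?_
    intro h0
    rw [SimpleGraph.diam, h0] at hdiam
    simp at hdiam
  have hnonempty : Nonempty ({x}ᶜ : Set V) := by
    obtain ⟨y, hy⟩ := exists_ne x
    exact ⟨⟨y, hy⟩⟩
  rw [connected_iff] at hxdis
  push_neg at hxdis
  have hpre : ¬ (G.induce ({x}ᶜ : Set V)).Preconnected := fun h => (hxdis h).false hnonempty.some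
  rw [Preconnected] at hpre
  push_neg at hpre
  obtain ⟨a, b, hab⟩ := hpre
  -- helper: if u not reachable to t in induced graph then u ~ x
  have key : ∀ (u : ({x}ᶜ : Set V)) (t : ({x}ᶜ : Set V)),
      ¬ (G.induce ({x}ᶜ : Set V)).Reachable u t → G.Adj (u : V) x := by
    rintro ⟨u, hu⟩ ⟨t, ht⟩ hnr
    have hut : u ≠ t := by rintro rfl; exact hnr (Reachable.refl _)
    have hnadj : ¬ G.Adj u t := by
      intro h
      exact hnr (SimpleGraph.Adj.reachable (by simpa using h))
    have hd2 : G.dist u t ≤ 2 := hdiam ▸ dist_le_diam hne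
    have hd1 : G.dist u t ≠ 1 := fun h => hnadj (dist_eq_one_iff_adj.mp h)
    have hd0 : G.dist u t ≠ 0 := by
      intro h
      exact hut (hconn.dist_eq_zero_iff.mp h)
    have hd : G.dist u t = 2 := by omega
    obtain ⟨p, hp⟩ := hconn.exists_walk_length_eq_dist u t
    rw [hd] at hp
    have h01 : G.Adj u (p.getVert 1) := by
      have := p.adj_getVert_succ (by omega : 0 < p.length)
      simpa using this
    have h12 : G.Adj (p.getVert 1) t := by
      have := p.adj_getVert_succ (by omega : 1 < p.length)
      have h2 : p.getVert 2 = t := by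
        have := p.getVert_length
        rwa [hp] at this
      rwa [h2] at this
    by_cases hm : p.getVert 1 = x
    · rwa [hm] at h01
    · exfalso
      apply hnr
      have ha1 : (G.induce ({x}ᶜ : Set V)).Adj ⟨u, hu⟩ ⟨p.getVert 1, hm⟩ := by simpa using h01
      have ha2 : (G.induce ({x}ᶜ : Set V)).Adj ⟨p.getVert 1, hm⟩ ⟨t, ht⟩ := by simpa using h12
      exact ha1.reachable.trans ha2.reachable
  intro u hu
  by_cases h1 : (G.induce ({x}ᶜ : Set V)).Reachable ⟨u, hu⟩ a
  · by_cases h2 : (G.induce ({x}ᶜ : Set V)).Reachable ⟨u, hu⟩ b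
    · exact absurd (h1.symm.trans h2) hab
    · exact key ⟨u, hu⟩ b h2
  · exact key ⟨u, hu⟩ a h1

/-- neighbor step from bridgeless -/
lemma nb_of_bridgeless {V : Type*} (G : SimpleGraph V) (x : V)
    (hbridgeless : ∀ e : Sym2 V, ¬G.IsBridge e)
    (huniv : ∀ u : V, u ≠ x → G.Adj u x) :
    ∀ u : V, u ≠ x → ∃ w, G.Adj u w ∧ w ≠ x := by
  intro u hu
  have hadj := huniv u hu
  have hb := hbridgeless s(u, x)
  rw [isBridge_iff] at hb
  push_neg at hb
  obtain ⟨p⟩ := hb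
  have hlen : 0 < p.length := by
    by_contra h
    have : p.length = 0 := by omega
    have := Walk.eq_of_length_eq_zero this
    exact hu this
  have h01 := p.adj_getVert_succ hlen
  rw [p.getVert_zero] at h01
  simp only [deleteEdges_adj, Set.mem_singleton_iff] at h01
  obtain ⟨hga, hne⟩ := h01
  refine ⟨p.getVert 1, hga, ?_⟩
  intro hx1
  rw [hx1] at hga hne
  exact hne rfl

lemma maxcut_exists {V : Type*} [Fintype V] (G : SimpleGraph V) (x : V)
    (hnb : ∀ u : V, u ≠ x → ∃ w, G.Adj u w ∧ w ≠ x) :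
    ∃ g : V → Bool, ∀ u : V, u ≠ x → ∃ w, G.Adj u w ∧ w ≠ x ∧ g w ≠ g u := by
  classical
  let cutF : (V → Bool) → ℕ := fun g =>
    (Finset.univ.filter (fun p : V × V =>
      G.Adj p.1 p.2 ∧ p.1 ≠ x ∧ p.2 ≠ x ∧ g p.1 ≠ g p.2)).card
  obtain ⟨g, -, hg⟩ := Finset.exists_max_image Finset.univ cutF Finset.univ_nonempty
  refine ⟨g, ?_⟩
  intro u hu
  by_contra hcon
  push_neg at hcon
  obtain ⟨w₀, hw₀, hw₀x⟩ := hnb u hu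
  set g' := Function.update g u (!g u) with hg'
  have hsub : (Finset.univ.filter (fun p : V × V =>
      G.Adj p.1 p.2 ∧ p.1 ≠ x ∧ p.2 ≠ x ∧ g p.1 ≠ g p.2)) ⊆
      (Finset.univ.filter (fun p : V × V =>
      G.Adj p.1 p.2 ∧ p.1 ≠ x ∧ p.2 ≠ x ∧ g' p.1 ≠ g' p.2)) := by
    intro p hp
    simp only [Finset.mem_filter, Finset.mem_univ, true_and] at hp ⊢
    obtain ⟨hadj, h1, h2, hne⟩ := hp
    have hp1 : p.1 ≠ u := by
      rintro rfl
      exact hne (hcon p.2 hadj h2).symm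
    have hp2 : p.2 ≠ u := by
      rintro rfl
      exact hne (hcon p.1 hadj.symm h1)
    refine ⟨hadj, h1, h2, ?_⟩
    rwa [hg', Function.update_of_ne hp1, Function.update_of_ne hp2]
  have hmem : (u, w₀) ∈ (Finset.univ.filter (fun p : V × V =>
      G.Adj p.1 p.2 ∧ p.1 ≠ x ∧ p.2 ≠ x ∧ g' p.1 ≠ g' p.2)) := by
    simp only [Finset.mem_filter, Finset.mem_univ, true_and]
    refine ⟨hw₀, hu, hw₀x, ?_⟩
    rw [hg', Function.update_self, Function.update_of_ne hw₀.ne', hcon w₀ hw₀ hw₀x]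
    exact (Bool.not_ne_self (g u)).symm ∘ Eq.symm
  have hnmem : (u, w₀) ∉ (Finset.univ.filter (fun p : V × V =>
      G.Adj p.1 p.2 ∧ p.1 ≠ x ∧ p.2 ≠ x ∧ g p.1 ≠ g p.2)) := by
    simp only [Finset.mem_filter, Finset.mem_univ, true_and]
    rintro ⟨-, -, -, hne⟩
    exact hne (hcon w₀ hw₀ hw₀x).symm
  have hlt : cutF g < cutF g' :=
    Finset.card_lt_card ((Finset.ssubset_iff_of_subset hsub).mpr ⟨(u, w₀), hmem, hnmem⟩)
  exact absurd (hg g' (Finset.mem_univ _)) (not_le.mpr hlt)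

lemma rainbow_three {V : Type*} [Fintype V] (G : SimpleGraph V) (x : V)
    (huniv : ∀ u : V, u ≠ x → G.Adj u x)
    (g : V → Bool)
    (hgood : ∀ u : V, u ≠ x → ∃ w, G.Adj u w ∧ w ≠ x ∧ g w ≠ g u) :
    ∃ c : Sym2 V → Fin 3, ∀ u v : V, u ≠ v →
      ∃ p : G.Walk u v, p.IsPath ∧ (p.edges.map c).Nodup := by
  classical
  set col : Bool → Fin 3 := fun b => if b then 0 else 1 with hcol
  have hcolne : ∀ s t : Bool, s ≠ t → col s ≠ col t := by decide
  have hcol2 : ∀ s : Bool, col s ≠ 2 := by decide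
  refine ⟨Sym2.lift ⟨fun a b => if a = x then col (g b) else if b = x then col (g a) else 2, ?_⟩, ?_⟩
  · intro a b
    by_cases ha : a = x <;> by_cases hb : b = x <;> simp [ha, hb]
  set c : Sym2 V → Fin 3 := Sym2.lift ⟨fun a b => if a = x then col (g b) else if b = x then col (g a) else 2, by intro a b; by_cases ha : a = x <;> by_cases hb : b = x <;> simp [ha, hb]⟩ with hc
  show ∀ u v : V, u ≠ v → ∃ p : G.Walk u v, p.IsPath ∧ (p.edges.map c).Nodup
  have hcx : ∀ u : V, u ≠ x → c s(u, x) = col (g u) := by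
    intro u hu; simp [hc, Sym2.lift_mk, hu]
  have hcx' : ∀ u : V, u ≠ x → c s(x, u) = col (g u) := by
    intro u hu; simp [hc, Sym2.lift_mk]
  have hc2 : ∀ u w : V, u ≠ x → w ≠ x → c s(u, w) = 2 := by
    intro u w hu hw; simp [hc, Sym2.lift_mk, hu, hw]
  intro a b hab
  by_cases hadj : G.Adj a b
  · refine ⟨Walk.cons hadj Walk.nil, ?_, by simp⟩
    simp [Walk.isPath_def, hab]
  · have ha : a ≠ x := by
      rintro rfl
      exact hadj ((huniv b (Ne.symm hab)).symm)
    have hb : b ≠ x := by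
      rintro rfl
      exact hadj (huniv a hab)
    by_cases hgab : g a = g b
    · obtain ⟨a', haa', ha'x, hga'⟩ := hgood a ha
      have ha'b : a' ≠ b := by rintro rfl; exact hadj haa'
      refine ⟨Walk.cons haa' (Walk.cons (huniv a' ha'x) (Walk.cons (huniv b hb).symm Walk.nil)), ?_, ?_⟩
      · simp [Walk.isPath_def, haa'.ne, ha, hab, ha'x, ha'b, hb, Ne.symm hb]
      · have e1 : c s(a, a') = 2 := hc2 a a' ha ha'x
        have e2 : c s(a', x) = col (g a') := hcx a' ha'x
        have e3 : c s(x, b) = col (g b) := hcx' b hb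
        simp only [Walk.edges_cons, Walk.edges_nil, List.map_cons, List.map_nil, e1, e2, e3]
        refine List.nodup_cons.mpr ⟨?_, List.nodup_cons.mpr ⟨?_, List.nodup_singleton _⟩⟩
        · simp only [List.mem_cons, List.mem_singleton, List.not_mem_nil]
          push_neg
          exact ⟨(hcol2 (g a')).symm, fun h => (hcol2 (g b)) h.symm, by simp⟩
        · simp only [List.mem_singleton]
          exact hcolne _ _ (hgab ▸ hga')
    · refine ⟨Walk.cons (huniv a ha) (Walk.cons (huniv b hb).symm Walk.nil), ?_, ?_⟩
      · simp [Walk.isPath_def, ha, hab, Ne.symm hb]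
      · have e1 : c s(a, x) = col (g a) := hcx a ha
        have e2 : c s(x, b) = col (g b) := hcx' b hb
        simp only [Walk.edges_cons, Walk.edges_nil, List.map_cons, List.map_nil, e1, e2]
        exact List.nodup_cons.mpr ⟨by simpa using hcolne _ _ hgab, List.nodup_singleton _⟩

/-- A bridgeless connected graph of diameter `2` with a cut vertex has rainbow
connection number at most `3`. -/
theorem rc_le_three_of_bridgeless_diam_two_cutVertex {V : Type*} [Fintype V]
    (G : SimpleGraph V) (hconn : G.Connected)
    (hbridgeless : ∀ e : Sym2 V, ¬G.IsBridge e) (hdiam : G.diam = 2)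
    (hcut : ∃ v : V, G.IsCutVertex v) :
    G.rc ≤ 3 := by
  obtain ⟨x, hx⟩ := hcut
  have hne : G.ediam ≠ ⊤ := by
    intro h
    rw [SimpleGraph.diam, h] at hdiam
    simp at hdiam
  have huniv := univ_adj_of_cut G hconn hne hdiam x hx
  have hnb := nb_of_bridgeless G x hbridgeless huniv
  obtain ⟨g, hgood⟩ := maxcut_exists G x hnb
  have h3 : G.RainbowConnected 3 := rainbow_three G x huniv g hgood
  exact Nat.sInf_le h3
end

section
/- Let G be a strongly regular graph with parameters (n, k, λ, μ) satisfying μ ≥ 1, and suppose G is not a star. Then the rainbow connection number of G satisfies rc(G) ≤ 5. -/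
open SimpleGraph

open SimpleGraph

set_option linter.unusedSectionVars false
namespace RC

variable {V : Type*} [Fintype V] [DecidableEq V] (G : SimpleGraph V) [DecidableRel G.Adj]

/-- Common neighbors as a `Finset`. -/
def CN (u v : V) : Finset V := G.neighborFinset u ∩ G.neighborFinset v

lemma mem_CN {u v z : V} : z ∈ CN G u v ↔ G.Adj u z ∧ G.Adj v z := by
  simp [CN]

lemma CN_eq (u v : V) : CN G u v = (G.commonNeighbors u v).toFinset := by
  ext z; simp [CN, mem_commonNeighbors]

variable {n k l m : ℕ}

lemma card_CN_adj (h : G.IsSRGWith n k l m) {u v : V} (huv : G.Adj u v) :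
    (CN G u v).card = l := by
  rw [CN_eq, Set.toFinset_card, h.of_adj u v huv]

lemma card_CN_not_adj (h : G.IsSRGWith n k l m) {u v : V} (hne : u ≠ v)
    (huv : ¬ G.Adj u v) : (CN G u v).card = m := by
  rw [CN_eq, Set.toFinset_card, h.of_not_adj hne huv]

lemma exists_common (h : G.IsSRGWith n k l m) (hm : 1 ≤ m) {u v : V} (hne : u ≠ v)
    (huv : ¬ G.Adj u v) : ∃ z, G.Adj u z ∧ G.Adj v z := by
  have hc : (CN G u v).card = m := card_CN_not_adj G h hne huv
  have : (CN G u v).Nonempty := Finset.card_pos.mp (by omega)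
  obtain ⟨z, hz⟩ := this
  exact ⟨z, (mem_CN G).mp hz⟩

lemma card_A (h : G.IsSRGWith n k l m) (x : V) : (G.neighborFinset x).card = k := by
  rw [G.card_neighborFinset_eq_degree x, h.regular x]

lemma k_ge (h : G.IsSRGWith n k l m) (hm : 1 ≤ m) {u v : V} (hne : u ≠ v)
    (hnadj : ¬ G.Adj u v) : l + 2 ≤ k := by
  obtain ⟨w, hwu, hwv⟩ := exists_common G h hm hne hnadj
  have hsub : CN G w u ⊆ (G.neighborFinset w).erase u := by
    intro z hz
    rw [mem_CN] at hz
    exact Finset.mem_erase.mpr ⟨fun hzu => G.irrefl (hzu ▸ hz.2), (mem_neighborFinset G w z).mpr hz.1⟩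
  have hvmem : v ∈ (G.neighborFinset w).erase u :=
    Finset.mem_erase.mpr ⟨hne.symm, (mem_neighborFinset G w v).mpr hwv.symm⟩
  have hvnot : v ∉ CN G w u := by
    rw [mem_CN]; rintro ⟨-, h2⟩; exact hnadj h2
  have hss : CN G w u ⊂ (G.neighborFinset w).erase u :=
    (Finset.ssubset_iff_of_subset hsub).mpr ⟨v, hvmem, hvnot⟩
  have hlt := Finset.card_lt_card hss
  rw [card_CN_adj G h hwu.symm, Finset.card_erase_of_mem ((mem_neighborFinset G w u).mpr hwu.symm),
    card_A G h w] at hlt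
  have hk1 : 1 ≤ k := by
    have : u ∈ G.neighborFinset w := (mem_neighborFinset G w u).mpr hwu.symm
    have := Finset.card_pos.mpr ⟨u, this⟩
    rw [card_A G h w] at this; omega
  omega

set_option linter.unusedSectionVars false

variable {V : Type*} [Fintype V] [DecidableEq V] (G : SimpleGraph V) [DecidableRel G.Adj]

/-- `a` is an attachment vertex for `b` (relative to hub `x`). -/
def SA (x b a : V) : Prop :=
  G.Adj x a ∧ (G.Adj a b ∨ ∃ w, ¬ G.Adj x w ∧ G.Adj b w ∧ G.Adj w a)

/-- The 5-coloring. -/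
def col (x : V) (α : V → Bool) : Sym2 V → Fin 5 :=
  Sym2.lift ⟨fun u v =>
    if u = x then (if α v then 0 else 1)
    else if v = x then (if α u then 0 else 1)
    else if G.Adj x u ∧ ¬ G.Adj x v then (if α u then 2 else 3)
    else if G.Adj x v ∧ ¬ G.Adj x u then (if α v then 2 else 3)
    else 4, by
      intro u v
      by_cases h1 : u = x <;> by_cases h2 : v = x <;>
        simp [h1, h2] <;>
      by_cases h3 : G.Adj x u <;> by_cases h4 : G.Adj x v <;>
        simp [h1, h2, h3, h4]⟩

variable {x : V} {α : V → Bool}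

lemma col_xA (a : V) : col G x α s(x, a) = if α a then 0 else 1 := by
  simp [col]

lemma col_Ax {a : V} (ha : a ≠ x) : col G x α s(a, x) = if α a then 0 else 1 := by
  simp [col, ha]

lemma adj_ne' {a : V} (ha : G.Adj x a) : a ≠ x := fun h => G.irrefl (h ▸ ha)

lemma col_AB {a b : V} (ha : G.Adj x a) (hb : ¬ G.Adj x b) (hbx : b ≠ x) :
    col G x α s(a, b) = if α a then 2 else 3 := by
  simp [col, adj_ne' G ha, hbx, ha, hb]

lemma col_BA {a b : V} (ha : G.Adj x a) (hb : ¬ G.Adj x b) (hbx : b ≠ x) :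
    col G x α s(b, a) = if α a then 2 else 3 := by
  simp [col, adj_ne' G ha, hbx, ha, hb]

lemma col_AA {a a' : V} (ha : G.Adj x a) (ha' : G.Adj x a') :
    col G x α s(a, a') = 4 := by
  simp [col, adj_ne' G ha, adj_ne' G ha', ha, ha']

lemma col_BB {b b' : V} (hb : ¬ G.Adj x b) (hb' : ¬ G.Adj x b') (hbx : b ≠ x)
    (hb'x : b' ≠ x) : col G x α s(b, b') = 4 := by
  simp [col, hbx, hb'x, hb, hb']

set_option maxHeartbeats 1000000

variable {V : Type*} [Fintype V] [DecidableEq V] (G : SimpleGraph V) [DecidableRel G.Adj]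
variable {x : V} {α : V → Bool}

/-- path x — z — v where z ∈ A, v ∈ B -/
lemma pathXB {v z : V} (hvx : v ≠ x) (hv : ¬ G.Adj x v) (hz1 : G.Adj x z) (hz2 : G.Adj v z) :
    ∃ p : G.Walk x v, p.IsPath ∧ ((p.edges.map (col G x α)).Nodup) := by
  have h1 : x ≠ z := (adj_ne' G hz1).symm
  have h2 : z ≠ v := fun h => hv (h ▸ hz1)
  refine ⟨Walk.cons hz1 (Walk.cons hz2.symm Walk.nil), ?_, ?_⟩
  · rw [Walk.isPath_def]
    simp [h1, h2, hvx.symm, Ne.symm hvx]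
  · simp only [Walk.edges_cons, Walk.edges_nil, List.map_cons, List.map_nil]
    rw [col_xA, col_AB G hz1 hv hvx]
    cases hαz : α z <;> simp
/-- path for u ∈ A, v ∈ B non-adjacent, via a common neighbor z -/
lemma pathAB {n k l m : ℕ} (h : G.IsSRGWith n k l m) (hm : 1 ≤ m) {u v : V}
    (hu : G.Adj x u) (hvx : v ≠ x) (hv : ¬ G.Adj x v) (hnadj : ¬ G.Adj u v) :
    ∃ p : G.Walk u v, p.IsPath ∧ ((p.edges.map (col G x α)).Nodup) := by
  have hne : u ≠ v := fun h' => hv (h' ▸ hu)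
  obtain ⟨z, hzu, hzv⟩ := exists_common G h hm hne hnadj
  have hzx : z ≠ x := fun h' => hv (h' ▸ hzv).symm
  have hzu' : z ≠ u := fun h' => G.irrefl (h' ▸ hzu)
  have hzv' : z ≠ v := fun h' => G.irrefl (h' ▸ hzv)
  refine ⟨Walk.cons hzu (Walk.cons hzv.symm Walk.nil), ?_, ?_⟩
  · rw [Walk.isPath_def]
    simp [hne, Ne.symm hzu', hzv']
  · simp only [Walk.edges_cons, Walk.edges_nil, List.map_cons, List.map_nil]
    by_cases hz : G.Adj x z
    · rw [col_AA G hu hz, col_AB G hz hv hvx]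
      cases hαz : α z <;> simp
    · rw [col_AB G hu hz hzx, col_BB G hz hv hzx hvx]
      cases hαu : α u <;> simp

/-- core path for u, v ∈ B non-adjacent given an attachment pair -/
lemma pathBBcore {u v a a' : V} (hux : u ≠ x) (hvx : v ≠ x) (hu : ¬ G.Adj x u)
    (hv : ¬ G.Adj x v) (hne : u ≠ v) (hnadj : ¬ G.Adj u v)
    (ha : G.Adj x a) (hau : G.Adj a u) (hSA : SA G x v a') (hαne : α a ≠ α a') :
    ∃ p : G.Walk u v, p.IsPath ∧ ((p.edges.map (col G x α)).Nodup) := by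
  obtain ⟨ha', hcases⟩ := hSA
  have haa' : a ≠ a' := fun h' => hαne (h' ▸ rfl)
  have hax : a ≠ x := adj_ne' G ha
  have ha'x : a' ≠ x := adj_ne' G ha'
  have hua : u ≠ a := fun h' => hu (h' ▸ ha)
  have hua' : u ≠ a' := fun h' => hu (h' ▸ ha')
  have hva : v ≠ a := fun h' => hv (h' ▸ ha)
  have hva' : v ≠ a' := fun h' => hv (h' ▸ ha')
  rcases hcases with hdir | ⟨w, hw, hvw, hwadj⟩
  · -- u — a — x — a' — v
    refine ⟨Walk.cons hau.symm (Walk.cons ha.symm (Walk.cons ha' (Walk.cons hdir Walk.nil))), ?_, ?_⟩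
    · rw [Walk.isPath_def]
      simp [hne, hua, hua', hux, hax, haa', Ne.symm hva, Ne.symm ha'x, Ne.symm hvx, Ne.symm hva']
    · simp only [Walk.edges_cons, Walk.edges_nil, List.map_cons, List.map_nil]
      rw [col_BA G ha hu hux, col_Ax G hax, col_xA, col_AB G ha' hv hvx]
      cases hα1 : α a <;> cases hα2 : α a' <;> simp_all
  · -- u — a — x — a' — w — v
    have hwx : w ≠ x := fun h' => hv (h' ▸ hvw).symm
    have hwu : w ≠ u := fun h' => hnadj (h' ▸ hvw).symm
    have hwv : w ≠ v := fun h' => G.irrefl (h' ▸ hvw)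
    have hwa : w ≠ a := fun h' => hw (h' ▸ ha)
    have hwa' : w ≠ a' := fun h' => hw (h' ▸ ha')
    refine ⟨Walk.cons hau.symm (Walk.cons ha.symm (Walk.cons ha'
      (Walk.cons hwadj.symm (Walk.cons hvw.symm Walk.nil)))), ?_, ?_⟩
    · rw [Walk.isPath_def]
      simp [hne, hua, hua', hux, hax, haa', Ne.symm hva, Ne.symm ha'x, Ne.symm hvx,
        Ne.symm hva', Ne.symm hwa, Ne.symm hwx, Ne.symm hwa', hwv, Ne.symm hwu]
    · simp only [Walk.edges_cons, Walk.edges_nil, List.map_cons, List.map_nil]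
      rw [col_BA G ha hu hux, col_Ax G hax, col_xA, col_AB G ha' hw hwx,
        col_BB G hw hv hwx hvx]
      cases hα1 : α a <;> cases hα2 : α a' <;> simp_all
/-- every neighbor of x has a neighbor outside N[x] -/
lemma NB_nonempty {n k l m : ℕ} (h : G.IsSRGWith n k l m) (hk : l + 2 ≤ k) {a : V}
    (ha : G.Adj x a) : ∃ b, ¬ G.Adj x b ∧ b ≠ x ∧ G.Adj a b := by
  by_contra hcon
  push_neg at hcon
  have hsub : G.neighborFinset a ⊆ insert x (CN G x a) := by
    intro z hz
    rw [mem_neighborFinset] at hz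
    rcases eq_or_ne z x with rfl | hzx
    · exact Finset.mem_insert_self _ _
    · by_cases hxz : G.Adj x z
      · exact Finset.mem_insert_of_mem ((mem_CN G).mpr ⟨hxz, hz⟩)
      · exact absurd (hcon z hxz hzx) (by simpa using hz)
  have hcard := Finset.card_le_card hsub
  rw [card_A G h a] at hcard
  have := Finset.card_insert_le x (CN G x a)
  rw [card_CN_adj G h ha] at this
  omega

/-- the key SRG exchange lemma -/
lemma L1 {n k l m : ℕ} (h : G.IsSRGWith n k l m) {a b v : V}
    (ha : G.Adj x a) (hab : G.Adj a b) (hbB : ¬ G.Adj x b) (hbx : b ≠ x)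
    (hv : G.Adj x v) (hav : ¬ G.Adj a v) (hbv : ¬ G.Adj b v) :
    ∃ w, ¬ G.Adj x w ∧ w ≠ x ∧ G.Adj b w ∧ G.Adj w v := by
  by_contra hcon
  push_neg at hcon
  have hbvne : b ≠ v := fun h' => hbB (h'.symm ▸ hv)
  have hsub : CN G b v ⊆ CN G x b := by
    intro z hz
    rw [mem_CN] at hz ⊢
    have hzx : z ≠ x := fun h' => hbB (h' ▸ hz.1).symm
    by_cases hxz : G.Adj x z
    · exact ⟨hxz, hz.1⟩
    · exact absurd hz.2.symm (hcon z hxz hzx hz.1)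
  have hc1 : (CN G b v).card = m := card_CN_not_adj G h hbvne hbv
  have hc2 : (CN G x b).card = m := card_CN_not_adj G h (Ne.symm hbx) hbB
  have heq : CN G b v = CN G x b :=
    Finset.eq_of_subset_of_card_le hsub (by omega)
  have hamem : a ∈ CN G b v := by
    rw [heq, mem_CN]; exact ⟨ha, hab.symm⟩
  rw [mem_CN] at hamem
  exact hav hamem.2.symm
/-- path for u, v ∈ A non-adjacent -/
lemma pathAA {n k l m : ℕ} (h : G.IsSRGWith n k l m) (hk : l + 2 ≤ k)
    (hs1 : ∃ a, G.Adj x a ∧ α a = true) (hs2 : ∃ a, G.Adj x a ∧ α a = false)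
    {u v : V} (hu : G.Adj x u) (hv : G.Adj x v) (hne : u ≠ v) (hnadj : ¬ G.Adj u v) :
    ∃ p : G.Walk u v, p.IsPath ∧ ((p.edges.map (col G x α)).Nodup) := by
  have hux := adj_ne' G hu
  have hvx := adj_ne' G hv
  by_cases hαuv : α u = α v
  · obtain ⟨e, he1, he2⟩ : ∃ e, G.Adj x e ∧ α e ≠ α u := by
      cases hval : α u
      · obtain ⟨a, h1, h2⟩ := hs1; exact ⟨a, h1, by simp [h2, hval]⟩
      · obtain ⟨a, h1, h2⟩ := hs2; exact ⟨a, h1, by simp [h2, hval]⟩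
    have hex := adj_ne' G he1
    have heu : e ≠ u := fun h' => he2 (h' ▸ rfl)
    have hev : e ≠ v := fun h' => he2 (by rw [h', hαuv])
    by_cases hd : G.Adj e v
    · refine ⟨Walk.cons hu.symm (Walk.cons he1 (Walk.cons hd Walk.nil)), ?_, ?_⟩
      · rw [Walk.isPath_def]
        simp [hux, Ne.symm heu, hne, Ne.symm hex, Ne.symm hvx, hev]
      · simp only [Walk.edges_cons, Walk.edges_nil, List.map_cons, List.map_nil]
        rw [col_Ax G hux, col_xA, col_AA G he1 hv]
        cases hα1 : α u <;> cases hα2 : α e <;> simp_all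
    · obtain ⟨b, hbB, hbx, heb⟩ := NB_nonempty G h hk he1
      have hbu : b ≠ u := fun h' => hbB (h' ▸ hu)
      have hbv : b ≠ v := fun h' => hbB (h' ▸ hv)
      have hbe : b ≠ e := fun h' => hbB (h' ▸ he1)
      by_cases hbadj : G.Adj b v
      · refine ⟨Walk.cons hu.symm (Walk.cons he1 (Walk.cons heb (Walk.cons hbadj Walk.nil))), ?_, ?_⟩
        · rw [Walk.isPath_def]
          simp [hux, Ne.symm heu, hne, Ne.symm hex, Ne.symm hvx, hev, Ne.symm hbu, hbv, Ne.symm hbe, hbx, Ne.symm hbx]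
        · simp only [Walk.edges_cons, Walk.edges_nil, List.map_cons, List.map_nil]
          rw [col_Ax G hux, col_xA, col_AB G he1 hbB hbx, col_BA G hv hbB hbx]
          rw [← hαuv]
          cases hα1 : α u <;> cases hα2 : α e <;> simp_all
      · obtain ⟨w, hwB, hwx, hbw, hwv⟩ := L1 G h he1 heb hbB hbx hv hd hbadj
        have hwu : w ≠ u := fun h' => hwB (h' ▸ hu)
        have hwv' : w ≠ v := fun h' => hwB (h' ▸ hv)
        have hwe : w ≠ e := fun h' => hwB (h' ▸ he1)
        have hwb : w ≠ b := fun h' => G.irrefl (h' ▸ hbw)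
        refine ⟨Walk.cons hu.symm (Walk.cons he1 (Walk.cons heb
          (Walk.cons hbw (Walk.cons hwv Walk.nil)))), ?_, ?_⟩
        · rw [Walk.isPath_def]
          simp [hux, Ne.symm heu, hne, Ne.symm hex, Ne.symm hvx, hev, Ne.symm hbu, hbv,
            Ne.symm hbe, hbx, Ne.symm hbx, Ne.symm hwu, hwv', Ne.symm hwe, hwx, Ne.symm hwx, Ne.symm hwb]
        · simp only [Walk.edges_cons, Walk.edges_nil, List.map_cons, List.map_nil]
          rw [col_Ax G hux, col_xA, col_AB G he1 hbB hbx, col_BB G hbB hwB hbx hwx,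
            col_BA G hv hwB hwx]
          rw [← hαuv]
          cases hα1 : α u <;> cases hα2 : α e <;> simp_all
  · refine ⟨Walk.cons hu.symm (Walk.cons hv Walk.nil), ?_, ?_⟩
    · rw [Walk.isPath_def]
      simp [hux, hne, Ne.symm hvx]
    · simp only [Walk.edges_cons, Walk.edges_nil, List.map_cons, List.map_nil]
      rw [col_Ax G hux, col_xA]
      cases hα1 : α u <;> cases hα2 : α v <;> simp_all
lemma connects {n k l m : ℕ} (h : G.IsSRGWith n k l m) (hm : 1 ≤ m) (hk : l + 2 ≤ k)
    (hs1 : ∃ a, G.Adj x a ∧ α a = true) (hs2 : ∃ a, G.Adj x a ∧ α a = false)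
    (hRB : ∀ b b', ¬ G.Adj x b → ¬ G.Adj x b' → b ≠ x → b' ≠ x → b ≠ b' → ¬ G.Adj b b' →
      ∃ a a', (SA G x b a ∨ SA G x b' a) ∧ (SA G x b a' ∨ SA G x b' a') ∧ α a ≠ α a') :
    ∀ u v : V, u ≠ v → ∃ p : G.Walk u v, p.IsPath ∧ ((p.edges.map (col G x α)).Nodup) := by
  have flip : ∀ {u v : V}, (∃ p : G.Walk u v, p.IsPath ∧ ((p.edges.map (col G x α)).Nodup)) →
      ∃ p : G.Walk v u, p.IsPath ∧ ((p.edges.map (col G x α)).Nodup) := by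
    rintro u v ⟨p, hp, hnd⟩
    exact ⟨p.reverse, hp.reverse,
      by rw [Walk.edges_reverse, List.map_reverse]; exact List.nodup_reverse.mpr hnd⟩
  intro u v hne
  by_cases hadj : G.Adj u v
  · exact ⟨Walk.cons hadj Walk.nil, by simp [Walk.isPath_def, hne], by simp⟩
  rcases eq_or_ne u x with rfl | hux
  · obtain ⟨z, hz1, hz2⟩ := exists_common G h hm hne hadj
    exact pathXB G (Ne.symm hne) hadj hz1 hz2
  by_cases hvx' : v = x
  · have hxveq : x = v := hvx'.symm
    subst hxveq
    apply flip
    have hadj' : ¬ G.Adj x u := fun h' => hadj h'.symm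
    obtain ⟨z, hz1, hz2⟩ := exists_common G h hm (Ne.symm hne) hadj'
    exact pathXB G hux hadj' hz1 hz2
  have hvx : v ≠ x := hvx'
  have hadj' : ¬ G.Adj v u := fun h' => hadj h'.symm
  by_cases hu : G.Adj x u <;> by_cases hv : G.Adj x v
  · exact pathAA G h hk hs1 hs2 hu hv hne hadj
  · exact pathAB G h hm hu hvx hv hadj
  · exact flip (pathAB G h hm hv hux hu hadj')
  · obtain ⟨a, a', hPa, hPa', hαne⟩ := hRB u v hu hv hux hvx hne hadj
    obtain ⟨a0, ha0x, ha0u⟩ := exists_common G h hm (Ne.symm hux) hu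
    obtain ⟨a0', ha0'x, ha0'v⟩ := exists_common G h hm (Ne.symm hvx) hv
    by_cases hc : α a0 = α a0'
    · have ht : (α a ≠ α a0) ∨ (α a' ≠ α a0) := by
        by_contra hcc
        push_neg at hcc
        exact hαne (hcc.1.trans hcc.2.symm)
      have key : ∀ t : V, (SA G x u t ∨ SA G x v t) → α t ≠ α a0 →
          ∃ p : G.Walk u v, p.IsPath ∧ ((p.edges.map (col G x α)).Nodup) := by
        rintro t (hSAu | hSAv) htne
        · refine flip (pathBBcore G hvx hux hv hu (Ne.symm hne) hadj' ha0'x ha0'v.symm hSAu ?_)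
          rw [← hc]; exact fun h' => htne h'.symm
        · exact pathBBcore G hux hvx hu hv hne hadj ha0x ha0u.symm hSAv
            (fun h' => htne h'.symm)
      rcases ht with ht | ht
      · exact key a hPa ht
      · exact key a' hPa' ht
    · exact pathBBcore G hux hvx hu hv hne hadj ha0x ha0u.symm ⟨ha0'x, Or.inl ha0'v.symm⟩ hc
/-- if `a ∈ A` is not an attachment vertex for `b`, then `a` is adjacent
to all common neighbors of `x` and `b`. -/
lemma FL {n k l m : ℕ} (h : G.IsSRGWith n k l m) {b a : V}
    (hxb : ¬ G.Adj x b) (hbx : b ≠ x) (ha : G.Adj x a) (hnSA : ¬ SA G x b a) :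
    ∀ z ∈ CN G x b, G.Adj z a := by
  have hOr : ¬ (G.Adj a b ∨ ∃ w, ¬ G.Adj x w ∧ G.Adj b w ∧ G.Adj w a) :=
    fun ho => hnSA ⟨ha, ho⟩
  push_neg at hOr
  obtain ⟨hnab, hnw⟩ := hOr
  have hab : a ≠ b := fun h' => hxb (h' ▸ ha)
  have hsub : CN G a b ⊆ CN G x b := by
    intro z hz
    rw [mem_CN] at hz ⊢
    by_cases hxz : G.Adj x z
    · exact ⟨hxz, hz.2⟩
    · exact absurd hz.1.symm (hnw z hxz hz.2)
  have hc1 : (CN G a b).card = m := card_CN_not_adj G h hab hnab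
  have hc2 : (CN G x b).card = m := card_CN_not_adj G h (Ne.symm hbx) hxb
  have heq : CN G a b = CN G x b := Finset.eq_of_subset_of_card_le hsub (by omega)
  intro z hz
  rw [← heq, mem_CN] at hz
  exact hz.1.symm

/-- two vertices of `A` which both dominate `CN x b` are adjacent. -/
lemma CL {n k l m : ℕ} (h : G.IsSRGWith n k l m) (hm : 1 ≤ m) {b p q : V}
    (hxb : ¬ G.Adj x b) (hbx : b ≠ x) (hp : G.Adj x p) (hq : G.Adj x q) (hne : p ≠ q)
    (hdp : ∀ z ∈ CN G x b, G.Adj z p) (hdq : ∀ z ∈ CN G x b, G.Adj z q) :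
    G.Adj p q := by
  by_contra hnadj
  have hsub : insert x (CN G x b) ⊆ CN G p q := by
    intro z hz
    rcases Finset.mem_insert.mp hz with rfl | hz
    · exact (mem_CN G).mpr ⟨hp.symm, hq.symm⟩
    · exact (mem_CN G).mpr ⟨(hdp z hz).symm, (hdq z hz).symm⟩
  have hxnot : x ∉ CN G x b := by
    rw [mem_CN]; rintro ⟨hxx, -⟩; exact G.irrefl hxx
  have hcard := Finset.card_le_card hsub
  rw [Finset.card_insert_of_notMem hxnot, card_CN_not_adj G h (Ne.symm hbx) hxb,
    card_CN_not_adj G h hne hnadj] at hcard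
  omega
lemma exists_alpha {n k l m : ℕ} (h : G.IsSRGWith n k l m) (hm : 1 ≤ m) (hk : l + 2 ≤ k)
    (x : V) :
    ∃ α : V → Bool, (∃ a, G.Adj x a ∧ α a = true) ∧ (∃ a, G.Adj x a ∧ α a = false) ∧
      ∀ b b', ¬ G.Adj x b → ¬ G.Adj x b' → b ≠ x → b' ≠ x → b ≠ b' → ¬ G.Adj b b' →
        ∃ a a', (SA G x b a ∨ SA G x b' a) ∧ (SA G x b a' ∨ SA G x b' a') ∧ α a ≠ α a' := by
  by_cases hA : ∃ a a', G.Adj x a ∧ G.Adj x a' ∧ G.Adj a a'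
  · obtain ⟨a1, a2, ha1, ha2, ha12⟩ := hA
    have hl1 : 1 ≤ l := by
      have hc := card_CN_adj G h ha12
      have : a2 ∈ CN G a1 a2 → False := by
        rw [mem_CN]; rintro ⟨h1, h2⟩; exact G.irrefl h2
      have hmem : x ∈ CN G a1 a2 := (mem_CN G).mpr ⟨ha1.symm, ha2.symm⟩
      have := Finset.card_pos.mpr ⟨x, hmem⟩
      omega
    classical
    set I := (G.neighborFinset x).powerset.filter
      (fun s => ∀ u ∈ s, ∀ v ∈ s, u ≠ v → ¬ G.Adj u v) with hI
    have hsingleton : {a1} ∈ I := by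
      refine Finset.mem_filter.mpr ⟨Finset.mem_powerset.mpr ?_, ?_⟩
      · simpa using ha1
      · intro u hu v hv huv
        rw [Finset.mem_singleton] at hu hv
        exact absurd (hu.trans hv.symm) huv
    obtain ⟨M, hMI, hMmax⟩ := Finset.exists_max_image I Finset.card ⟨{a1}, hsingleton⟩
    rw [hI, Finset.mem_filter, Finset.mem_powerset] at hMI
    obtain ⟨hMA, hMind⟩ := hMI
    have hM1 : 1 ≤ M.card := by
      have := hMmax {a1} hsingleton
      simp only [Finset.card_singleton] at this
      omega
    obtain ⟨m₁, hm₁⟩ := Finset.card_pos.mp (by omega : 0 < M.card)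
    have hdom : ∀ a, G.Adj x a → a ∉ M → ∃ m' ∈ M, G.Adj a m' := by
      intro a ha haM
      by_contra hcon
      push_neg at hcon
      have hins : insert a M ∈ I := by
        refine Finset.mem_filter.mpr ⟨Finset.mem_powerset.mpr ?_, ?_⟩
        · intro z hz
          rcases Finset.mem_insert.mp hz with rfl | hz
          · exact (mem_neighborFinset G x z).mpr ha
          · exact hMA hz
        · intro u hu v hv huv
          rcases Finset.mem_insert.mp hu with hua | huM <;>
            rcases Finset.mem_insert.mp hv with hva | hvM
          · exact absurd (hua.trans hva.symm) huv
          · intro had; exact hcon v hvM (by rwa [hua] at had)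
          · intro had; exact hcon u huM (by rw [hva] at had; exact had.symm)
          · exact hMind u huM v hvM huv
      have hcard := hMmax _ hins
      rw [Finset.card_insert_of_notMem haM] at hcard
      omega
    have hMnotall : (a1 ∉ M ∧ G.Adj x a1) ∨ (a2 ∉ M ∧ G.Adj x a2) := by
      by_cases h1 : a1 ∈ M
      · by_cases h2 : a2 ∈ M
        · exact absurd ha12 (hMind a1 h1 a2 h2 (G.ne_of_adj ha12))
        · exact Or.inr ⟨h2, ha2⟩
      · exact Or.inl ⟨h1, ha1⟩
    obtain ⟨aF, haFM, haFx⟩ : ∃ a, a ∉ M ∧ G.Adj x a := by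
      rcases hMnotall with ⟨h1, h2⟩ | ⟨h1, h2⟩
      · exact ⟨a1, h1, h2⟩
      · exact ⟨a2, h1, h2⟩
    refine ⟨fun a => decide (a ∈ M),
      ⟨m₁, (mem_neighborFinset G x m₁).mp (hMA hm₁), by simp [hm₁]⟩,
      ⟨aF, haFx, by simp [haFM]⟩, ?_⟩
    intro b b' hb hb' hbx hb'x hbb' hnadj
    by_contra hcon
    push_neg at hcon
    have hEq : ∀ a a', (SA G x b a ∨ SA G x b' a) → (SA G x b a' ∨ SA G x b' a') →
        (a ∈ M ↔ a' ∈ M) := by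
      intro a a' h1 h2
      have := hcon a a' h1 h2
      rwa [decide_eq_decide] at this
    obtain ⟨a₀, ha₀x, ha₀b⟩ := exists_common G h hm (Ne.symm hbx) hb
    have hPa₀ : SA G x b a₀ ∨ SA G x b' a₀ := Or.inl ⟨ha₀x, Or.inl ha₀b.symm⟩
    by_cases hc : a₀ ∈ M
    · -- all attachment vertices lie in M
      have hSM : ∀ a, (SA G x b a ∨ SA G x b' a) → a ∈ M := by
        intro a hPa
        exact (hEq a a₀ hPa hPa₀).mpr hc
      set K := (G.neighborFinset x).filter (fun a => ¬ (SA G x b a ∨ SA G x b' a)) with hKdef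
      set SF := (G.neighborFinset x).filter (fun a => (SA G x b a ∨ SA G x b' a)) with hSFdef
      have hKA : ∀ p ∈ K, G.Adj x p := fun p hp =>
        (mem_neighborFinset G x p).mp (Finset.mem_filter.mp hp).1
      have hKnP : ∀ p ∈ K, ¬ (SA G x b p ∨ SA G x b' p) := fun p hp =>
        (Finset.mem_filter.mp hp).2
      have hKdom : ∀ p ∈ K, ∀ z ∈ CN G x b, G.Adj z p := by
        intro p hp
        exact FL G h hb hbx (hKA p hp) (fun hSA => hKnP p hp (Or.inl hSA))
      have hKcl : ∀ p q, p ∈ K → q ∈ K → p ≠ q → G.Adj p q := by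
        intro p q hp hq hpq
        exact CL G h hm hb hbx (hKA p hp) (hKA q hq) hpq (hKdom p hp) (hKdom q hq)
      have hCNsub : ∀ s, (SA G x b s ∨ SA G x b' s) → CN G x s ⊆ K := by
        intro s hPs z hz
        rw [mem_CN] at hz
        refine Finset.mem_filter.mpr ⟨(mem_neighborFinset G x z).mpr hz.1, ?_⟩
        intro hPz
        have hzM := hSM z hPz
        have hsM := hSM s hPs
        have hzs : z ≠ s := fun h' => G.irrefl (h' ▸ hz.2)
        exact hMind z hzM s hsM hzs hz.2.symm
      have hlK : l ≤ K.card := by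
        have := Finset.card_le_card (hCNsub a₀ hPa₀)
        rwa [card_CN_adj G h ha₀x] at this
      have hKl : K.card ≤ l := by
        by_cases h2 : 2 ≤ K.card
        · obtain ⟨p, hp, q, hq, hpq⟩ := Finset.one_lt_card.mp (show 1 < K.card by omega)
          have hpq' := hKcl p q hp hq hpq
          have hsub2 : insert x (CN G x b ∪ (K.erase p).erase q) ⊆ CN G p q := by
            intro z hz
            rcases Finset.mem_insert.mp hz with rfl | hz
            · exact (mem_CN G).mpr ⟨(hKA p hp).symm, (hKA q hq).symm⟩
            · rcases Finset.mem_union.mp hz with hz1 | hz1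
              · exact (mem_CN G).mpr ⟨(hKdom p hp z hz1).symm, (hKdom q hq z hz1).symm⟩
              · have hzq : z ≠ q := (Finset.mem_erase.mp hz1).1
                have hz2 := Finset.mem_of_mem_erase hz1
                have hzp : z ≠ p := (Finset.mem_erase.mp hz2).1
                have hzK := Finset.mem_of_mem_erase hz2
                exact (mem_CN G).mpr ⟨hKcl p z hp hzK (Ne.symm hzp),
                  hKcl q z hq hzK (Ne.symm hzq)⟩
          have hdisj : Disjoint (CN G x b) ((K.erase p).erase q) := by
            rw [Finset.disjoint_left]
            intro z hz hz'
            have hzK := Finset.mem_of_mem_erase (Finset.mem_of_mem_erase hz')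
            rw [mem_CN] at hz
            exact hKnP z hzK (Or.inl ⟨hz.1, Or.inl hz.2.symm⟩)
          have hxnot : x ∉ CN G x b ∪ (K.erase p).erase q := by
            intro hx
            rcases Finset.mem_union.mp hx with hx | hx
            · rw [mem_CN] at hx; exact G.irrefl hx.1
            · exact G.irrefl
                (hKA x (Finset.mem_of_mem_erase (Finset.mem_of_mem_erase hx)))
          have hcard2 := Finset.card_le_card hsub2
          rw [Finset.card_insert_of_notMem hxnot, Finset.card_union_of_disjoint hdisj,
            card_CN_not_adj G h (Ne.symm hbx) hb, card_CN_adj G h hpq'] at hcard2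
          have herase : ((K.erase p).erase q).card = K.card - 2 := by
            rw [Finset.card_erase_of_mem (Finset.mem_erase.mpr ⟨Ne.symm hpq, hq⟩),
              Finset.card_erase_of_mem hp]
            omega
          rw [herase] at hcard2
          omega
        · omega
      have hKne : K.Nonempty := Finset.card_pos.mp (by omega)
      obtain ⟨r, hrK⟩ := hKne
      have hrx : G.Adj x r := hKA r hrK
      have hsubF : (K.erase r) ∪ SF ⊆ CN G x r := by
        intro z hz
        rcases Finset.mem_union.mp hz with hz | hz
        · have hzr : z ≠ r := (Finset.mem_erase.mp hz).1
          have hzK := Finset.mem_of_mem_erase hz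
          exact (mem_CN G).mpr ⟨hKA z hzK, hKcl r z hrK hzK (Ne.symm hzr)⟩
        · obtain ⟨hzA, hPz⟩ := Finset.mem_filter.mp hz
          have hzx : G.Adj x z := (mem_neighborFinset G x z).mp hzA
          have hCNeq : CN G x z = K := by
            refine Finset.eq_of_subset_of_card_le (hCNsub z hPz) ?_
            rw [card_CN_adj G h hzx]
            omega
          have hrmem : r ∈ CN G x z := by rw [hCNeq]; exact hrK
          rw [mem_CN] at hrmem
          exact (mem_CN G).mpr ⟨hzx, hrmem.2.symm⟩
      have hdisjF : Disjoint (K.erase r) SF := by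
        rw [Finset.disjoint_left]
        intro z hz hz'
        exact hKnP z (Finset.mem_of_mem_erase hz) (Finset.mem_filter.mp hz').2
      have hcardF := Finset.card_le_card hsubF
      rw [Finset.card_union_of_disjoint hdisjF, card_CN_adj G h hrx,
        Finset.card_erase_of_mem hrK] at hcardF
      have hsplit : SF.card + K.card = k := by
        have hfc := Finset.card_filter_add_card_filter_not
          (s := G.neighborFinset x) (p := fun a => (SA G x b a ∨ SA G x b' a))
        rw [card_A G h x] at hfc
        rw [hSFdef, hKdef]
        exact hfc
      omega
    · -- no attachment vertex lies in M
      have hSnM : ∀ a, (SA G x b a ∨ SA G x b' a) → a ∉ M := by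
        intro a hPa haM
        exact hc ((hEq a a₀ hPa hPa₀).mp haM)
      have hMdomCN : ∀ p ∈ M, ∀ z ∈ CN G x b, G.Adj z p := by
        intro p hp
        have hpx : G.Adj x p := (mem_neighborFinset G x p).mp (hMA hp)
        exact FL G h hb hbx hpx (fun hSA => hSnM p (Or.inl hSA) hp)
      have hMcl : ∀ p q, p ∈ M → q ∈ M → p ≠ q → G.Adj p q := by
        intro p q hp hq hpq
        exact CL G h hm hb hbx ((mem_neighborFinset G x p).mp (hMA hp))
          ((mem_neighborFinset G x q).mp (hMA hq)) hpq (hMdomCN p hp) (hMdomCN q hq)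
      have hMcard : M.card ≤ 1 := by
        by_contra h2
        push_neg at h2
        obtain ⟨p, hp, q, hq, hpq⟩ := Finset.one_lt_card.mp h2
        exact hMind p hp q hq hpq (hMcl p q hp hq hpq)
      have hMeq : M = {m₁} := by
        have hcard1 : M.card = 1 := le_antisymm hMcard hM1
        obtain ⟨y, hy⟩ := Finset.card_eq_one.mp hcard1
        rw [hy] at hm₁
        rw [Finset.mem_singleton] at hm₁
        rw [hy, hm₁]
      have hm₁x : G.Adj x m₁ := (mem_neighborFinset G x m₁).mp (hMA hm₁)
      have hCNeq : CN G x m₁ = (G.neighborFinset x).erase m₁ := by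
        ext z
        rw [mem_CN, Finset.mem_erase, mem_neighborFinset]
        constructor
        · rintro ⟨h1, h2⟩
          exact ⟨fun h' => G.irrefl (h' ▸ h2), h1⟩
        · rintro ⟨h1, h2⟩
          refine ⟨h2, ?_⟩
          have hzM : z ∉ M := by
            rw [hMeq, Finset.mem_singleton]; exact h1
          obtain ⟨m', hm', hadj⟩ := hdom z h2 hzM
          rw [hMeq, Finset.mem_singleton] at hm'
          rw [hm'] at hadj
          exact hadj.symm
      have hcard1 := congrArg Finset.card hCNeq
      rw [card_CN_adj G h hm₁x, Finset.card_erase_of_mem (hMA hm₁), card_A G h x] at hcard1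
      omega
  · -- the neighborhood of x is independent
    push_neg at hA
    have hcard : (G.neighborFinset x).card = k := card_A G h x
    obtain ⟨a₀, ha₀, a₁, ha₁, hne01⟩ := Finset.one_lt_card.mp
      (show 1 < (G.neighborFinset x).card by omega)
    rw [mem_neighborFinset] at ha₀ ha₁
    refine ⟨fun a => decide (a = a₀), ⟨a₀, ha₀, by simp⟩,
      ⟨a₁, ha₁, by simp [Ne.symm hne01]⟩, ?_⟩
    intro b b' hb hb' hbx hb'x hbb' hnadj
    have hSAall : ∀ a, G.Adj x a → SA G x b a := by
      intro a ha
      by_cases hab : G.Adj a b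
      · exact ⟨ha, Or.inl hab⟩
      · have hnab : a ≠ b := fun h' => hb (h' ▸ ha)
        obtain ⟨z, hz1, hz2⟩ := exists_common G h hm hnab hab
        have hxz : ¬ G.Adj x z := fun h' => hA a z ha h' hz1
        exact ⟨ha, Or.inr ⟨z, hxz, hz2, hz1.symm⟩⟩
    exact ⟨a₀, a₁, Or.inl (hSAall a₀ ha₀), Or.inl (hSAall a₁ ha₁),
      by simp [Ne.symm hne01]⟩

end RC

/-- A strongly regular graph (neither empty nor complete) with `μ ≥ 1` which is not a
star has rainbow connection number at most `5`. -/
theorem rc_le_five_of_isSRGWith {V : Type*} [Fintype V] (G : SimpleGraph V)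
    [DecidableRel G.Adj] (n k ℓ μ : ℕ) (hsrg : G.IsSRGWith n k ℓ μ)
    (hne : G ≠ ⊥) (hnc : G ≠ ⊤) (hμ : 1 ≤ μ)
    (hstar : ¬∃ t : ℕ, Nonempty (G ≃g completeBipartiteGraph (Fin 1) (Fin t))) :
    G.rc ≤ 5 := by
  classical
  have hpair : ∃ u v : V, u ≠ v ∧ ¬ G.Adj u v := by
    by_contra hcc
    push_neg at hcc
    apply hnc
    ext u v
    simp only [top_adj]
    exact ⟨fun h' => G.ne_of_adj h', fun h' => hcc u v h'⟩
  obtain ⟨u0, v0, hne0, hnadj0⟩ := hpair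
  have hk : ℓ + 2 ≤ k := RC.k_ge G hsrg hμ hne0 hnadj0
  obtain ⟨α, hs1, hs2, hRB⟩ := RC.exists_alpha G hsrg hμ hk u0
  have h5 : G.RainbowConnected 5 :=
    ⟨RC.col G u0 α, RC.connects G hsrg hμ hk hs1 hs2 hRB⟩
  exact Nat.sInf_le h5
end

section
/- For each integer n ≥ 4, the rainbow connection number of the cycle C_n on n vertices equals ⌈n/2⌉. -/
open SimpleGraph

namespace RCAux

open SimpleGraph
open scoped Fin.CommRing

variable {n : ℕ} [NeZero n]

lemma val_add_cast (u : Fin n) (i : ℕ) : (u + (i : Fin n)).val = (u.val + i) % n := by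
  rw [Fin.val_add, Fin.val_natCast, Nat.add_mod_mod]

lemma add_cast_inj {u : Fin n} {i j : ℕ} (hi : i < n) (hj : j < n)
    (h : u + (i : Fin n) = u + (j : Fin n)) : i = j := by
  have h' : (u.val + i) % n = (u.val + j) % n := by
    have := congrArg Fin.val h
    rwa [val_add_cast, val_add_cast] at this
  have h2 : i ≡ j [MOD n] := Nat.ModEq.add_left_cancel' u.val h'
  have h3 : i % n = j % n := h2
  rwa [Nat.mod_eq_of_lt hi, Nat.mod_eq_of_lt hj] at h3

lemma ne_add_cast (u : Fin n) {t : ℕ} (h1 : 1 ≤ t) (h2 : t < n) : u ≠ u + (t : Fin n) := by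
  intro h
  have : (0 : ℕ) = t := add_cast_inj (u := u) (Nat.pos_of_ne_zero (NeZero.ne n)) h2
    (by rw [Nat.cast_zero, add_zero]; exact h)
  omega

lemma val_one_eq (hn : 2 ≤ n) : (1 : Fin n).val = 1 := by
  rw [Fin.val_one', Nat.mod_eq_of_lt hn]

omit [NeZero n] in
lemma mod_self_eq {s : ℕ} (h0 : 0 < s) (h2 : s < 2 * n) (h : s % n = 0) : s = n := by
  obtain ⟨c, hc⟩ := Nat.dvd_of_mod_eq_zero h
  rcases Nat.lt_or_ge c 2 with hc2 | hc2
  · interval_cases c <;> omega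
  · have : n * 2 ≤ n * c := Nat.mul_le_mul_left n hc2
    omega

lemma val_sub_add {u v : Fin n} (hn : 0 < n) (h : u ≠ v) :
    (u - v).val + (v - u).val = n := by
  have hs : (u - v) + (v - u) = 0 := by ring
  have hval : ((u - v).val + (v - u).val) % n = 0 := by
    have := congrArg Fin.val hs
    rwa [Fin.val_add, Fin.val_zero] at this
  have h1 : (u - v).val ≠ 0 := by
    intro h0
    exact sub_ne_zero_of_ne h (Fin.ext (by rw [h0, Fin.val_zero]))
  have hb1 : (u - v).val < n := (u - v).isLt
  have hb2 : (v - u).val < n := (v - u).isLt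
  exact mod_self_eq (by omega) (by omega) hval

lemma adj_succ (hn : 4 ≤ n) (u : Fin n) : (cycleGraph n).Adj u (u + 1) := by
  rw [cycleGraph_adj']
  right
  have : u + 1 - u = 1 := by ring
  rw [this, val_one_eq (by omega)]

def arcWalk (hn : 4 ≤ n) : (L : ℕ) → (u : Fin n) → (cycleGraph n).Walk u (u + (L : Fin n))
  | 0, u => Walk.nil.copy rfl (by simp)
  | L + 1, u => (Walk.cons (adj_succ hn u) (arcWalk hn L (u + 1))).copy rfl
      (by push_cast; ring)

lemma arcWalk_edges (hn : 4 ≤ n) (L : ℕ) (u : Fin n) :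
    (arcWalk hn L u).edges
      = (List.range L).map (fun i : ℕ => s(u + (i : Fin n), u + (i : Fin n) + 1)) := by
  induction L generalizing u with
  | zero => simp [arcWalk]
  | succ L ih =>
      rw [arcWalk, Walk.edges_copy, Walk.edges_cons, ih, List.range_succ_eq_map,
        List.map_cons, List.map_map]
      congr 1
      · norm_num
      · refine List.map_congr_left fun i hi => ?_
        have h1 : (u + 1) + (i : Fin n) = u + ((Nat.succ i : ℕ) : Fin n) := by
          push_cast; ring
        rw [Function.comp_apply, h1]

lemma arcWalk_support (hn : 4 ≤ n) (L : ℕ) (u : Fin n) :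
    (arcWalk hn L u).support = (List.range (L + 1)).map (fun i : ℕ => u + (i : Fin n)) := by
  induction L generalizing u with
  | zero => simp [arcWalk, List.range_succ]
  | succ L ih =>
      rw [arcWalk, Walk.support_copy, Walk.support_cons, ih, List.range_succ_eq_map (n := L + 1),
        List.map_cons, List.map_map]
      congr 1
      · norm_num
      · refine List.map_congr_left fun i hi => ?_
        have h1 : (u + 1) + (i : Fin n) = u + ((Nat.succ i : ℕ) : Fin n) := by
          push_cast; ring
        rw [Function.comp_apply, h1]

lemma arcWalk_length (hn : 4 ≤ n) (L : ℕ) (u : Fin n) : (arcWalk hn L u).length = L := by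
  rw [← Walk.length_edges, arcWalk_edges, List.length_map, List.length_range]

lemma arcWalk_isPath (hn : 4 ≤ n) {L : ℕ} (hL : L < n) (u : Fin n) :
    (arcWalk hn L u).IsPath := by
  rw [Walk.isPath_def, arcWalk_support]
  refine (List.nodup_map_iff_inj_on List.nodup_range).mpr ?_
  intro i hi j hj hij
  rw [List.mem_range] at hi hj
  exact add_cast_inj (by omega) (by omega) hij

lemma not_both (hn : 4 ≤ n) (a b : Fin n) : ¬((b - a).val = 1 ∧ (a - b).val = 1) := by
  rintro ⟨h1, h2⟩
  have hs : (b - a) + (a - b) = 0 := by ring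
  have := congrArg Fin.val hs
  rw [Fin.val_add, h1, h2] at this
  simp only [Fin.val_zero] at this
  rw [Nat.mod_eq_of_lt (by omega)] at this
  omega

def colF (k : ℕ) (hk : 0 < k) (u : Fin n) : Fin k := ⟨u.val % k, Nat.mod_lt _ hk⟩

def col (hn : 4 ≤ n) (k : ℕ) (hk : 0 < k) : Sym2 (Fin n) → Fin k :=
  Sym2.lift ⟨fun a b =>
    if (b - a).val = 1 then colF k hk a
    else if (a - b).val = 1 then colF k hk b else ⟨0, hk⟩, by
      intro a b
      dsimp only
      by_cases h1 : (b - a).val = 1 <;> by_cases h2 : (a - b).val = 1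
      · exact absurd ⟨h1, h2⟩ (not_both hn a b)
      · simp [h1, h2]
      · simp [h1, h2]
      · simp [h1, h2]⟩

lemma col_edge (hn : 4 ≤ n) (k : ℕ) (hk : 0 < k) (x : Fin n) :
    col hn k hk s(x, x + 1) = colF k hk x := by
  have h1 : (x + 1 - x).val = 1 := by
    have : x + 1 - x = 1 := by ring
    rw [this, Fin.val_one', Nat.mod_eq_of_lt (by omega)]
  rw [col, Sym2.lift_mk]
  exact if_pos h1

omit [NeZero n] in
lemma key (hn : 4 ≤ n) {x d : ℕ} (hx : x < n) (hd1 : 1 ≤ d) (hd2 : d ≤ n / 2 - 1) :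
    x % ((n + 1) / 2) ≠ (x + d) % n % ((n + 1) / 2) := by
  set k := (n + 1) / 2 with hk
  intro h
  set y := (x + d) % n with hy
  have hyn : y < n := Nat.mod_lt _ (by omega)
  rcases Nat.lt_or_ge (x + d) n with hc | hc
  · have hyd : y = x + d := Nat.mod_eq_of_lt hc
    have hmod : x ≡ x + d [MOD k] := by rw [← hyd]; exact h
    have hdvd : k ∣ (x + d - x) := (Nat.modEq_iff_dvd' (by omega)).mp hmod
    have : k ≤ d := Nat.le_of_dvd (by omega) (by simpa using hdvd)
    omega
  · have hyd : y + n = x + d := by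
      have : (x + d) % n = x + d - n := by
        rw [Nat.mod_eq_sub_mod hc, Nat.mod_eq_of_lt (by omega)]
      omega
    have hxy : x = y + (n - d) := by omega
    have hmod : y ≡ y + (n - d) [MOD k] := by rw [← hxy]; exact h.symm
    have hdvd : k ∣ (n - d) := by
      have := (Nat.modEq_iff_dvd' (by omega)).mp hmod
      simpa using this
    obtain ⟨c, hc'⟩ := hdvd
    have hlow : k + 1 ≤ n - d := by omega
    have hhigh : n - d < 2 * k := by omega
    rcases Nat.lt_or_ge c 2 with h2 | h2
    · interval_cases c <;> omega
    · have : k * 2 ≤ k * c := Nat.mul_le_mul_left k h2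
      omega

lemma arc_colors (hn : 4 ≤ n) (hk : 0 < (n + 1) / 2) (u : Fin n) {L : ℕ} (hL : L ≤ n / 2) :
    ((arcWalk hn L u).edges.map (col hn _ hk)).Nodup := by
  rw [arcWalk_edges, List.map_map]
  refine (List.nodup_map_iff_inj_on List.nodup_range).mpr ?_
  intro i hi j hj hij
  rw [List.mem_range] at hi hj
  rw [Function.comp_apply, Function.comp_apply, col_edge, col_edge] at hij
  have hcv : (u.val + i) % n % ((n + 1) / 2) = (u.val + j) % n % ((n + 1) / 2) := by
    simpa [colF, Fin.ext_iff, val_add_cast] using hij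
  rcases Nat.lt_trichotomy i j with hlt | heq | hlt
  · exfalso
    have hrew : ((u.val + i) % n + (j - i)) % n = (u.val + j) % n := by
      rw [Nat.mod_add_mod]; congr 1; omega
    exact key (x := (u.val + i) % n) hn (Nat.mod_lt _ (by omega)) (show 1 ≤ j - i by omega)
      (show j - i ≤ n / 2 - 1 by omega) (by rw [hrew]; exact hcv)
  · exact heq
  · exfalso
    have hrew : ((u.val + j) % n + (i - j)) % n = (u.val + i) % n := by
      rw [Nat.mod_add_mod]; congr 1; omega
    exact key (x := (u.val + j) % n) hn (Nat.mod_lt _ (by omega)) (show 1 ≤ i - j by omega)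
      (show i - j ≤ n / 2 - 1 by omega) (by rw [hrew]; exact hcv.symm)

theorem ub (hn : 4 ≤ n) : (cycleGraph n).RainbowConnected ((n + 1) / 2) := by
  have hk : 0 < (n + 1) / 2 := by omega
  refine ⟨col hn _ hk, fun u v huv => ?_⟩
  rcases Nat.lt_or_ge (n / 2) (v - u).val with hd | hd
  · -- go backward: arc from v to u, reversed
    have hsum : (u - v).val + (v - u).val = n := val_sub_add (by omega) huv
    have hd' : (u - v).val ≤ n / 2 := by omega
    refine ⟨((arcWalk hn (u - v).val v).copy rfl
      (by rw [Fin.cast_val_eq_self]; ring)).reverse, ?_, ?_⟩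
    · exact (((Walk.isPath_copy _ _ _).mpr (arcWalk_isPath hn (by omega) v))).reverse
    · rw [Walk.edges_reverse, Walk.edges_copy, List.map_reverse, List.nodup_reverse]
      exact arc_colors hn hk v hd'
  · refine ⟨(arcWalk hn (v - u).val u).copy rfl
      (by rw [Fin.cast_val_eq_self]; ring), ?_, ?_⟩
    · exact (Walk.isPath_copy _ _ _).mpr (arcWalk_isPath hn (by omega) u)
    · rw [Walk.edges_copy]
      exact arc_colors hn hk u hd

lemma disp (hn : 4 ≤ n) {u v : Fin n} (p : (cycleGraph n).Walk u v) :
    ∃ a b : ℕ, a + b = p.length ∧ (a : Fin n) = v - u + (b : Fin n) ∧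
      (b = 0 → ∀ e ∈ p.edges, ∃ i : ℕ, i < a ∧ e = s(u + (i : Fin n), u + (i : Fin n) + 1)) := by
  induction p with
  | nil => exact ⟨0, 0, rfl, by push_cast; ring, by simp⟩
  | @cons u w v h q ih =>
      obtain ⟨a, b, hab, hd, he⟩ := ih
      rw [cycleGraph_adj'] at h
      rcases h with h | h
      · -- w = u - 1
        have hw : w = u - 1 := by
          have h1 : u - w = 1 := Fin.ext (by rw [h, val_one_eq (by omega)])
          linear_combination -h1
        refine ⟨a, b + 1, by rw [Walk.length_cons]; omega, ?_, fun hb => absurd hb (by omega)⟩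
        rw [hw] at hd
        push_cast
        push_cast at hd
        linear_combination hd
      · -- w = u + 1
        have hw : w = u + 1 := by
          have h1 : w - u = 1 := Fin.ext (by rw [h, val_one_eq (by omega)])
          linear_combination h1
        refine ⟨a + 1, b, by rw [Walk.length_cons]; omega, ?_, ?_⟩
        · rw [hw] at hd; push_cast; push_cast at hd; linear_combination hd
        · intro hb e hme
          rw [Walk.edges_cons, List.mem_cons] at hme
          rcases hme with rfl | hme
          · exact ⟨0, by omega, by rw [hw]; norm_num⟩
          · obtain ⟨i, hi, hei⟩ := he hb e hme
            refine ⟨i + 1, by omega, ?_⟩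
            have hcast : (u + 1) + (i : Fin n) = u + ((i + 1 : ℕ) : Fin n) := by
              push_cast; ring
            rw [hei, hw, hcast]

lemma lb (hn : 4 ≤ n) {m : ℕ} (h : (cycleGraph n).RainbowConnected m) : (n + 1) / 2 ≤ m := by
  by_contra hm
  push_neg at hm
  obtain ⟨c, hc⟩ := h
  have step : ∀ u : Fin n, ∃ p : (cycleGraph n).Walk u (u + ((n / 2 : ℕ) : Fin n)),
      (p.edges.map c).Nodup ∧ p.length = n / 2 ∧ n / 2 ≤ m ∧
      (∀ e ∈ p.edges, ∃ i : ℕ, i < n / 2 ∧ e = s(u + (i : Fin n), u + (i : Fin n) + 1)) := by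
    intro u
    obtain ⟨p, hp, hcn⟩ := hc u (u + ((n / 2 : ℕ) : Fin n))
      (ne_add_cast (t := n / 2) u (by omega) (by omega))
    obtain ⟨a, b, hab, hd, he⟩ := disp hn p
    have hlen : p.length ≤ m := by
      have := hcn.length_le_card
      rwa [List.length_map, Walk.length_edges, Fintype.card_fin] at this
    have hvu : (u + ((n / 2 : ℕ) : Fin n)) - u = ((n / 2 : ℕ) : Fin n) := by ring
    rw [hvu] at hd
    have hval : a % n = (n / 2 % n + b) % n := by
      have h0 := congrArg Fin.val hd
      rwa [Fin.val_natCast, val_add_cast, Fin.val_natCast] at h0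
    have h1 : a % n = a := Nat.mod_eq_of_lt (by omega)
    have h2 : (n / 2 % n + b) % n = n / 2 + b := by
      rw [Nat.mod_eq_of_lt (show n / 2 < n by omega)]
      exact Nat.mod_eq_of_lt (by omega)
    have ha : a = n / 2 + b := by omega
    have hb0 : b = 0 := by omega
    refine ⟨p, hcn, by omega, by omega, ?_⟩
    intro e hme
    obtain ⟨i, hi, hei⟩ := he hb0 e hme
    exact ⟨i, by omega, hei⟩
  -- window injectivity for the edge coloring
  have win : ∀ u : Fin n, ∀ i j : ℕ, i < n / 2 → j < n / 2 →
      c s(u + (i : Fin n), u + (i : Fin n) + 1) = c s(u + (j : Fin n), u + (j : Fin n) + 1) →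
      i = j := by
    intro u i j hi hj hF
    obtain ⟨p, hcn, hlen, hm2, hedge⟩ := step u
    have hnd : p.edges.Nodup := hcn.of_map c
    set E : List (Sym2 (Fin n)) :=
      (List.range (n / 2)).map (fun i : ℕ => s(u + (i : Fin n), u + (i : Fin n) + 1)) with hE
    have hsub : p.edges.toFinset ⊆ E.toFinset := by
      intro e hme
      rw [List.mem_toFinset] at hme ⊢
      obtain ⟨i', hi', rfl⟩ := hedge e hme
      exact List.mem_map.mpr ⟨i', List.mem_range.mpr hi', rfl⟩
    have hcard : E.toFinset.card ≤ n / 2 :=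
      le_trans (List.toFinset_card_le E) (by simp [hE])
    have hpcard : p.edges.toFinset.card = n / 2 := by
      rw [List.toFinset_card_of_nodup hnd, Walk.length_edges, hlen]
    have heq : p.edges.toFinset = E.toFinset :=
      Finset.eq_of_subset_of_card_le hsub (le_trans hcard (le_of_eq hpcard.symm))
    have hmem : ∀ i' : ℕ, i' < n / 2 →
        s(u + (i' : Fin n), u + (i' : Fin n) + 1) ∈ p.edges := by
      intro i' hi'
      rw [← List.mem_toFinset, heq, List.mem_toFinset]
      exact List.mem_map.mpr ⟨i', List.mem_range.mpr hi', rfl⟩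
    have hedgeeq := (List.nodup_map_iff_inj_on hnd).mp hcn _ (hmem i hi) _ (hmem j hj) hF
    rcases Sym2.eq_iff.mp hedgeeq with ⟨h1, _⟩ | ⟨h1, h2⟩
    · exact add_cast_inj (by omega) (by omega) h1
    · exfalso
      have e1 : u + (i : Fin n) = u + ((j + 1 : ℕ) : Fin n) := by
        rw [h1]; push_cast; ring
      have e2 : u + ((i + 1 : ℕ) : Fin n) = u + (j : Fin n) := by
        push_cast; rw [← add_assoc]; exact h2
      have q1 := add_cast_inj (by omega) (by omega) e1
      have q2 := add_cast_inj (by omega) (by omega) e2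
      omega
  -- n must be odd beyond this point
  obtain ⟨p0, _, _, hm2, _⟩ := step 0
  rcases Nat.even_or_odd n with he | ho
  · obtain ⟨r, hr⟩ := he; omega
  obtain ⟨s, hs⟩ := ho
  have hs2 : 2 ≤ s := by omega
  have hmn : m = n / 2 := by omega
  -- shift invariance
  have shift : ∀ u : Fin n,
      c s(u + ((n / 2 : ℕ) : Fin n), u + ((n / 2 : ℕ) : Fin n) + 1) = c s(u, u + 1) := by
    intro u
    have hSu : ∀ w : Fin n,
        Finset.image (fun i : Fin (n / 2) =>
          c s(w + ((i.val : ℕ) : Fin n), w + ((i.val : ℕ) : Fin n) + 1)) Finset.univ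
          = Finset.univ := by
      intro w
      apply Finset.eq_univ_of_card
      rw [Finset.card_image_of_injective _ ?_, Finset.card_univ, Fintype.card_fin,
        Fintype.card_fin, hmn]
      intro i j hij
      exact Fin.ext (win w i.val j.val i.isLt j.isLt hij)
    have hmem : c s(u, u + 1) ∈ Finset.image (fun i : Fin (n / 2) =>
        c s((u + 1) + ((i.val : ℕ) : Fin n), (u + 1) + ((i.val : ℕ) : Fin n) + 1))
        Finset.univ := by
      rw [hSu (u + 1)]; exact Finset.mem_univ _
    obtain ⟨i, -, hi⟩ := Finset.mem_image.mp hmem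
    by_cases hlast : i.val = n / 2 - 1
    · have hcast : (u + 1) + ((i.val : ℕ) : Fin n) = u + ((n / 2 : ℕ) : Fin n) := by
        rw [hlast]
        have hrw : (n / 2 : ℕ) = (n / 2 - 1) + 1 := by omega
        rw [hrw]; push_cast; ring
      rw [hcast] at hi
      exact hi
    · exfalso
      have e1 : (u + 1) + ((i.val : ℕ) : Fin n) = u + ((i.val + 1 : ℕ) : Fin n) := by
        push_cast; ring
      rw [e1] at hi
      have h0 : u + ((0 : ℕ) : Fin n) = u := by norm_num
      have := win u (i.val + 1) 0 (by have := i.isLt; omega) (by omega)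
        (by rw [h0]; exact hi)
      omega
  -- iterate the shift
  have iter : ∀ (t : ℕ) (u : Fin n),
      c s(u + ((t * (n / 2) : ℕ) : Fin n), u + ((t * (n / 2) : ℕ) : Fin n) + 1)
        = c s(u, u + 1) := by
    intro t
    induction t with
    | zero => intro u; norm_num
    | succ t ih =>
        intro u
        have hrw : u + (((t + 1) * (n / 2) : ℕ) : Fin n)
            = (u + ((n / 2 : ℕ) : Fin n)) + ((t * (n / 2) : ℕ) : Fin n) := by
          push_cast; ring
        rw [hrw, ih (u + ((n / 2 : ℕ) : Fin n)), shift u]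
  -- Bezout: 4*s*(n/2) ≡ 1 mod n
  have harith : 4 * s * (n / 2) = (2 * s - 1) * n + 1 := by
    have hnd2 : n / 2 = s := by omega
    rw [hnd2, hs]
    obtain ⟨s', rfl⟩ : ∃ s', s = s' + 2 := ⟨s - 2, by omega⟩
    have h21 : 2 * (s' + 2) - 1 = 2 * s' + 3 := by omega
    rw [h21]; ring
  have hcast : (0 : Fin n) + ((4 * s * (n / 2) : ℕ) : Fin n) = 1 := by
    apply Fin.ext
    rw [val_add_cast, Fin.val_zero, Nat.zero_add, harith, Nat.add_comm,
      Nat.add_mul_mod_self_right, val_one_eq (by omega), Nat.mod_eq_of_lt (by omega)]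
  have hiter := iter (4 * s) 0
  rw [hcast] at hiter
  -- contradiction with window injectivity at 0
  have h0 : (0 : Fin n) + ((0 : ℕ) : Fin n) = 0 := by norm_num
  have h1 : (0 : Fin n) + ((1 : ℕ) : Fin n) = 1 := by norm_num
  have := win 0 1 0 (by omega) (by omega) (by rw [h0, h1]; exact hiter)
  omega

end RCAux

/-- For `n ≥ 4`, the rainbow connection number of the cycle `Cₙ` is `⌈n/2⌉`. -/
theorem rc_cycleGraph (n : ℕ) (hn : 4 ≤ n) :
    (cycleGraph n).rc = (n + 1) / 2 := by
  haveI : NeZero n := ⟨by omega⟩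
  refine le_antisymm (Nat.sInf_le (RCAux.ub hn)) (le_csInf ⟨_, RCAux.ub hn⟩ ?_)
  intro m hm
  exact RCAux.lb hn hm
end

section
/- For integers s and t with 2 ≤ s ≤ t, the rainbow connection number of the complete bipartite graph K_{s,t} equals min{⌈t^{1/s}⌉, 4}, where ⌈t^{1/s}⌉ denotes the least integer m with m^s ≥ t. -/
open SimpleGraph

lemma rc_lower_aux (s t k : ℕ) (hk : k ≤ 3)
    (h : (completeBipartiteGraph (Fin s) (Fin t)).RainbowConnected k) : t ≤ k ^ s := by
  obtain ⟨c, hc⟩ := h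
  have hinj : Function.Injective (fun (u : Fin t) (i : Fin s) => c s(Sum.inl i, Sum.inr u)) := by
    intro u v huv
    have hfe : ∀ i : Fin s, c s(Sum.inl i, Sum.inr u) = c s(Sum.inl i, Sum.inr v) :=
      fun i => congrFun huv i
    by_contra hne
    have hne' : (Sum.inr u : Fin s ⊕ Fin t) ≠ Sum.inr v := by simpa using hne
    obtain ⟨p, hp, hnd⟩ := hc _ _ hne'
    have hlen : p.length ≤ 3 := by
      have h1 : (p.edges.map c).length ≤ k := by
        simpa using List.Nodup.length_le_card hnd
      simpa using h1.trans hk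
    cases p with
    | nil => exact hne' rfl
    | cons h1 q =>
      rename_i x
      cases x with
      | inr w => simp [completeBipartiteGraph] at h1
      | inl a =>
        cases q with
        | cons h2 r =>
          rename_i y
          cases y with
          | inl b => simp [completeBipartiteGraph] at h2
          | inr w =>
            cases r with
            | nil =>
              -- p = u - a - v
              simp only [Walk.edges_cons, Walk.edges_nil, List.map_cons, List.map_nil,
                List.nodup_cons, List.mem_cons, List.not_mem_nil] at hnd
              apply hnd.1
              left
              calc c s(Sum.inr u, Sum.inl a) = c s(Sum.inl a, Sum.inr u) := by
                    rw [Sym2.eq_swap]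
                _ = c s(Sum.inl a, Sum.inr v) := hfe a
            | cons h3 r2 =>
              rename_i z
              cases z with
              | inr w2 => simp [completeBipartiteGraph] at h3
              | inl b =>
                cases r2 with
                | cons h4 r3 => simp [Walk.length_cons] at hlen; omega
  have := Fintype.card_le_of_injective _ hinj
  simpa [Fintype.card_fun] using this

lemma list_len_le {α : Type*} [DecidableEq α] (l₁ l₂ : List α) (h : l₁.Nodup) (hs : l₁ ⊆ l₂) :
    l₁.length ≤ l₂.length := by
  calc l₁.length = l₁.toFinset.card := (List.toFinset_card_of_nodup h).symm
    _ ≤ l₂.toFinset.card := Finset.card_le_card (fun x hx => by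
        simp only [List.mem_toFinset] at *; exact hs hx)
    _ ≤ l₂.length := l₂.toFinset_card_le

lemma rc_upperA (s t k : ℕ) (hs : 2 ≤ s) (hst : s ≤ t) (hk : 2 ≤ k) (htk : t ≤ k ^ s) :
    (completeBipartiteGraph (Fin s) (Fin t)).RainbowConnected k := by
  classical
  have hk0 : 0 < k := by omega
  have hk1 : 1 < k := hk
  set e : Fin s → (Fin s → Fin k) := fun i j => if j = i then ⟨1, hk1⟩ else ⟨0, hk0⟩ with he
  have heval : ∀ i j : Fin s, i ≠ j → e i i ≠ e i j := by
    intro i j hij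
    simp [he, Ne.symm hij]
  have einj : Function.Injective e := by
    intro i j hij
    by_contra hne
    have h1 := congrFun hij i
    simp [he, fun h => hne h, Ne.symm] at h1
  set L : List (Fin s → Fin k) := List.ofFn e ++ (Finset.univ.toList.filter (fun v => v ∉ List.ofFn e)) with hL
  have hLnd : L.Nodup := by
    refine List.Nodup.append (List.nodup_ofFn.mpr einj) ((Finset.nodup_toList _).filter _) ?_
    intro x hx1 hx2
    simp only [List.mem_filter] at hx2
    exact absurd hx1 (by simpa using hx2.2)
  have hLlen : k ^ s ≤ L.length := by
    have hsub : (Finset.univ.toList : List (Fin s → Fin k)) ⊆ L := by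
      intro x hx
      by_cases hxe : x ∈ List.ofFn e
      · exact List.mem_append_left _ hxe
      · exact List.mem_append_right _ (List.mem_filter.mpr ⟨hx, by simpa using hxe⟩)
    calc k ^ s = (Finset.univ.toList : List (Fin s → Fin k)).length := by
          simp [Finset.length_toList, Fintype.card_fun]
      _ ≤ L.length := list_len_le _ _ (Finset.nodup_toList _) hsub
  have htL : ∀ u : Fin t, (u : ℕ) < L.length := fun u => lt_of_lt_of_le (u.isLt.trans_le htk) hLlen
  set g : Fin t → (Fin s → Fin k) := fun u => L[(u:ℕ)]'(htL u) with hg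
  have ginj : Function.Injective g := by
    intro u v huv
    exact Fin.ext ((List.Nodup.getElem_inj_iff hLnd).mp huv)
  have gsmall : ∀ i : Fin s, g ⟨(i:ℕ), lt_of_lt_of_le i.isLt hst⟩ = e i := by
    intro i
    have hi : (i:ℕ) < (List.ofFn e).length := by simp
    show L[(i:ℕ)]'_ = e i
    rw [List.getElem_append_left hi]
    simp
  set f : (Fin s ⊕ Fin t) → (Fin s ⊕ Fin t) → Fin k := fun x y =>
    match x, y with
    | .inl i, .inr u => g u i
    | .inr u, .inl i => g u i
    | _, _ => ⟨0, hk0⟩ with hf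
  have hfsymm : ∀ x y, f x y = f y x := by
    rintro (i|u) (j|v) <;> rfl
  refine ⟨Sym2.lift ⟨f, hfsymm⟩, ?_⟩
  rintro (i|u) (j|v) hne
  · -- inl i, inl j
    have hij : i ≠ j := fun h => hne (by rw [h])
    set u0 : Fin t := ⟨(i:ℕ), lt_of_lt_of_le i.isLt hst⟩ with hu0
    have a1 : (completeBipartiteGraph (Fin s) (Fin t)).Adj (.inl i) (.inr u0) := by
      simp [completeBipartiteGraph]
    have a2 : (completeBipartiteGraph (Fin s) (Fin t)).Adj (.inr u0) (.inl j) := by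
      simp [completeBipartiteGraph]
    refine ⟨Walk.cons a1 (Walk.cons a2 Walk.nil), ?_, ?_⟩
    · simp [Walk.isPath_def, hij]
    · simp only [Walk.edges_cons, Walk.edges_nil, List.map_cons, List.map_nil, Sym2.lift_mk,
        List.nodup_cons, List.mem_cons, List.not_mem_nil]
      refine ⟨?_, by simp⟩
      show ¬(f (.inl i) (.inr u0) = f (.inr u0) (.inl j) ∨ False)
      rw [or_false]
      show g u0 i ≠ g u0 j
      rw [gsmall i]
      exact heval i j hij
  · -- inl i, inr v : edge
    have a1 : (completeBipartiteGraph (Fin s) (Fin t)).Adj (.inl i) (.inr v) := by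
      simp [completeBipartiteGraph]
    exact ⟨Walk.cons a1 Walk.nil, by simp [Walk.isPath_def], by simp⟩
  · -- inr u, inl j : edge
    have a1 : (completeBipartiteGraph (Fin s) (Fin t)).Adj (.inr u) (.inl j) := by
      simp [completeBipartiteGraph]
    exact ⟨Walk.cons a1 Walk.nil, by simp [Walk.isPath_def], by simp⟩
  · -- inr u, inr v
    have huv : u ≠ v := fun h => hne (by rw [h])
    have hgne : g u ≠ g v := fun h => huv (ginj h)
    obtain ⟨i, hi⟩ := Function.ne_iff.mp hgne
    have a1 : (completeBipartiteGraph (Fin s) (Fin t)).Adj (.inr u) (.inl i) := by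
      simp [completeBipartiteGraph]
    have a2 : (completeBipartiteGraph (Fin s) (Fin t)).Adj (.inl i) (.inr v) := by
      simp [completeBipartiteGraph]
    refine ⟨Walk.cons a1 (Walk.cons a2 Walk.nil), ?_, ?_⟩
    · simp [Walk.isPath_def, huv]
    · simp only [Walk.edges_cons, Walk.edges_nil, List.map_cons, List.map_nil, Sym2.lift_mk,
        List.nodup_cons, List.mem_cons, List.not_mem_nil]
      refine ⟨?_, by simp⟩
      rw [or_false]
      show ¬ g u i = g v i
      exact hi

lemma rc_upperB (s t : ℕ) (hs : 2 ≤ s) (ht : 2 ≤ t) :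
    (completeBipartiteGraph (Fin s) (Fin t)).RainbowConnected 4 := by
  classical
  set a0 : Fin s := ⟨0, by omega⟩ with ha0
  set a1 : Fin s := ⟨1, by omega⟩ with ha1
  set b0 : Fin t := ⟨0, by omega⟩ with hb0
  set b1 : Fin t := ⟨1, by omega⟩ with hb1
  set col : Fin t → Fin s → Fin 4 := fun u i =>
    if u = b0 then (if i = a0 then 0 else 1) else (if i = a0 then 2 else 3) with hcol
  set f : (Fin s ⊕ Fin t) → (Fin s ⊕ Fin t) → Fin 4 := fun x y =>
    match x, y with
    | .inl i, .inr u => col u i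
    | .inr u, .inl i => col u i
    | _, _ => 0 with hf
  have hfsymm : ∀ x y, f x y = f y x := by rintro (i|u) (j|v) <;> rfl
  have fap1 : ∀ (i : Fin s) (u : Fin t), f (Sum.inl i) (Sum.inr u) = col u i := fun _ _ => rfl
  have fap2 : ∀ (i : Fin s) (u : Fin t), f (Sum.inr u) (Sum.inl i) = col u i := fun _ _ => rfl
  refine ⟨Sym2.lift ⟨f, hfsymm⟩, ?_⟩
  have adjlr : ∀ (i : Fin s) (u : Fin t),
      (completeBipartiteGraph (Fin s) (Fin t)).Adj (.inl i) (.inr u) := by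
    intro i u; simp [completeBipartiteGraph]
  have adjrl : ∀ (i : Fin s) (u : Fin t),
      (completeBipartiteGraph (Fin s) (Fin t)).Adj (.inr u) (.inl i) := by
    intro i u; simp [completeBipartiteGraph]
  rintro (i|u) (j|v) hne
  · -- inl i, inl j
    have hij : i ≠ j := fun h => hne (by rw [h])
    by_cases hi0 : i = a0
    · -- path Ai - B0 - Aj, colors [col 0 i = 0, col 0 j = 1]
      refine ⟨Walk.cons (adjlr i b0) (Walk.cons (adjrl j b0) Walk.nil), ?_, ?_⟩
      · simp [Walk.isPath_def, hij]
      · have hj0 : j ≠ a0 := fun h => hij (by rw [hi0, h])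
        simp [Sym2.lift_mk, fap1, fap2, hcol, hi0, hj0]
    · by_cases hj0 : j = a0
      · refine ⟨Walk.cons (adjlr i b0) (Walk.cons (adjrl j b0) Walk.nil), ?_, ?_⟩
        · simp [Walk.isPath_def, hij]
        · simp [Sym2.lift_mk, fap1, fap2, hcol, hi0, hj0]
      · -- path Ai - B0 - A0 - B1 - Aj, colors [1, 0, 2, 3]
        have hb01 : b0 ≠ b1 := by simp [hb0, hb1]
        have ha01 : a0 ≠ a1 := by simp [ha0, ha1]
        refine ⟨Walk.cons (adjlr i b0) (Walk.cons (adjrl a0 b0) (Walk.cons (adjlr a0 b1)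
          (Walk.cons (adjrl j b1) Walk.nil))), ?_, ?_⟩
        · simp [Walk.isPath_def, hij, hi0, hj0, hb01, Ne.symm hi0, Ne.symm hj0]
        · have hb10 : b1 ≠ b0 := Ne.symm hb01
          simp [Sym2.lift_mk, fap1, fap2, hcol, hi0, hj0, hb10]
  · exact ⟨Walk.cons (adjlr i v) Walk.nil, by simp [Walk.isPath_def], by simp⟩
  · exact ⟨Walk.cons (adjrl j u) Walk.nil, by simp [Walk.isPath_def], by simp⟩
  · -- inr u, inr v
    have huv : u ≠ v := fun h => hne (by rw [h])
    by_cases hu0 : u = b0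
    · have hv0 : v ≠ b0 := fun h => huv (by rw [hu0, h])
      refine ⟨Walk.cons (adjrl a0 u) (Walk.cons (adjlr a0 v) Walk.nil), ?_, ?_⟩
      · simp [Walk.isPath_def, huv]
      · simp [Sym2.lift_mk, fap1, fap2, hcol, hu0, hv0]
    · by_cases hv0 : v = b0
      · refine ⟨Walk.cons (adjrl a0 u) (Walk.cons (adjlr a0 v) Walk.nil), ?_, ?_⟩
        · simp [Walk.isPath_def, huv]
        · simp [Sym2.lift_mk, fap1, fap2, hcol, hu0, hv0]
      · -- path Bu - A0 - B0 - A1 - Bv, colors [2, 0, 1, 3]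
        have ha01 : a0 ≠ a1 := by simp [ha0, ha1]
        refine ⟨Walk.cons (adjrl a0 u) (Walk.cons (adjlr a0 b0) (Walk.cons (adjrl a1 b0)
          (Walk.cons (adjlr a1 v) Walk.nil))), ?_, ?_⟩
        · simp [Walk.isPath_def, huv, hu0, hv0, ha01, Ne.symm hu0, Ne.symm hv0]
        · have ha10 : a1 ≠ a0 := Ne.symm ha01
          simp [Sym2.lift_mk, fap1, fap2, hcol, hu0, hv0, ha10]


/-- For `2 ≤ s ≤ t`, the rainbow connection number of the complete bipartite graph
`K_{s,t}` equals `min ⌈t^(1/s)⌉ 4`, where `⌈t^(1/s)⌉` is the least integer `m` with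
`m ^ s ≥ t`. -/
theorem rc_completeBipartiteGraph (s t : ℕ) (hs : 2 ≤ s) (hst : s ≤ t) :
    (completeBipartiteGraph (Fin s) (Fin t)).rc = min (sInf {m : ℕ | t ≤ m ^ s}) 4 := by
  have ht2 : 2 ≤ t := hs.trans hst
  have hne : {m : ℕ | t ≤ m ^ s}.Nonempty := ⟨t, Nat.le_self_pow (by omega) t⟩
  set m0 := sInf {m : ℕ | t ≤ m ^ s} with hm0
  have hm0mem : t ≤ m0 ^ s := Nat.sInf_mem hne
  have hm02 : 2 ≤ m0 := by
    by_contra h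
    push_neg at h
    have h1 : m0 ^ s ≤ 1 ^ s := Nat.pow_le_pow_left (by omega) s
    simp at h1
    omega
  have hupper : (completeBipartiteGraph (Fin s) (Fin t)).RainbowConnected (min m0 4) := by
    rcases le_or_gt m0 4 with h4 | h4
    · rw [min_eq_left h4]; exact rc_upperA s t m0 hs hst hm02 hm0mem
    · rw [min_eq_right (le_of_lt h4)]; exact rc_upperB s t hs ht2
  have hlower : ∀ n ∈ {n | (completeBipartiteGraph (Fin s) (Fin t)).RainbowConnected n},
      min m0 4 ≤ n := by
    intro n hn
    rcases le_or_gt 4 n with h | h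
    · exact le_trans (min_le_right _ _) h
    · have := rc_lower_aux s t n (by omega) hn
      exact le_trans (min_le_left _ _) (Nat.sInf_le this)
  exact le_antisymm (Nat.sInf_le hupper) (le_csInf ⟨_, hupper⟩ hlower)
end

section
/- Let G be a connected graph and let D be a connected two-way dominating set of G. Then rc(G) ≤ rc(G[D]) + 3, where G[D] is the subgraph of G induced by D. -/
open SimpleGraph

private lemma nodup_append_aux {m kk : ℕ} {L M : List (Fin m)} (hL : L.Nodup) (hM : M.Nodup)
    (hlt : ∀ x ∈ L, (x : ℕ) < kk) (hge : ∀ x ∈ M, kk ≤ (x : ℕ)) : (L ++ M).Nodup :=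
  hL.append hM (fun x hx hx' => absurd (hge x hx') (not_le.mpr (hlt x hx)))

private lemma nodup_list_aux0 {m kk : ℕ} {L : List (Fin m)} (hL : L.Nodup)
    (hlt : ∀ x ∈ L, (x : ℕ) < kk) {a : Fin m} (ha : kk ≤ (a : ℕ)) : (a :: L).Nodup :=
  List.nodup_cons.mpr ⟨fun h => absurd (hlt a h) (not_lt.mpr ha), hL⟩

private lemma nodup_list_aux1 {m kk : ℕ} {L : List (Fin m)} (hL : L.Nodup)
    (hlt : ∀ x ∈ L, (x : ℕ) < kk) {a b : Fin m} (ha : kk ≤ (a : ℕ)) (hb : kk ≤ (b : ℕ))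
    (hab : a ≠ b) : (a :: (L ++ [b])).Nodup := by
  have h1 : (L ++ [a, b]).Nodup := by
    refine nodup_append_aux hL (by simp [hab]) hlt ?_
    intro x hx; simp at hx; rcases hx with rfl | rfl <;> assumption
  have p2 : List.Perm (a :: (L ++ [b])) (L ++ [a, b]) := List.perm_middle.symm
  exact p2.nodup_iff.mpr h1

private lemma nodup_list_aux2 {m kk : ℕ} {L : List (Fin m)} (hL : L.Nodup)
    (hlt : ∀ x ∈ L, (x : ℕ) < kk) {a b c : Fin m} (ha : kk ≤ (a : ℕ)) (hb : kk ≤ (b : ℕ))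
    (hc : kk ≤ (c : ℕ)) (hab : a ≠ b) (hac : a ≠ c) (hbc : b ≠ c) :
    (a :: b :: (L ++ [c])).Nodup := by
  have h1 : (L ++ [a, b, c]).Nodup := by
    refine nodup_append_aux hL (by simp [hab, hac, hbc]) hlt ?_
    intro x hx; simp at hx; rcases hx with rfl | rfl | rfl <;> assumption
  have p1 : List.Perm (b :: (L ++ [c])) (L ++ [b, c]) := List.perm_middle.symm
  have p2 : List.Perm (a :: b :: (L ++ [c])) (L ++ [a, b, c]) := (p1.cons a).trans List.perm_middle.symm
  exact p2.nodup_iff.mpr h1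

private lemma rainbow_nonempty {W : Type*} [Finite W] (H : SimpleGraph W) (h : H.Connected) :
    {n | H.RainbowConnected n}.Nonempty := by
  classical
  have : Fintype W := Fintype.ofFinite W
  refine ⟨Fintype.card (Sym2 W), (fun e => Fintype.equivFin (Sym2 W) e), fun u v huv => ?_⟩
  obtain ⟨w⟩ := h.preconnected u v
  exact ⟨w.toPath, w.toPath.2, (w.toPath.2.edges_nodup).map ((Fintype.equivFin (Sym2 W)).injective)⟩

/-- If `D` is a connected two-way dominating set of a connected graph `G`, then
`rc(G) ≤ rc(G[D]) + 3`. -/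
theorem rc_le_rc_induce_add_three {V : Type*} [Fintype V] (G : SimpleGraph V)
    (hconn : G.Connected) (D : Set V)
    (hdom : ∀ v ∉ D, ∃ u ∈ D, G.Adj u v)
    (hpendant : ∀ v : V, (G.neighborSet v).ncard = 1 → v ∈ D)
    (hDconn : (G.induce D).Connected) :
    G.rc ≤ (G.induce D).rc + 3 := by
  classical
  have hne : {n | (G.induce D).RainbowConnected n}.Nonempty := rainbow_nonempty _ hDconn
  have hk0 : (G.induce D).RainbowConnected ((G.induce D).rc) := Nat.sInf_mem hne
  set k := (G.induce D).rc with hkdef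
  obtain ⟨c₀, H₀⟩ := hk0
  suffices h : G.RainbowConnected (k + 3) by exact Nat.sInf_le h
  -- chosen dominators
  choose dv hdvD hdvAdj using hdom
  -- vertices with two dominators
  set X2 : V → Prop := fun x => ∃ a b : V, a ≠ b ∧ a ∈ D ∧ b ∈ D ∧ G.Adj a x ∧ G.Adj b x
    with hX2def
  have hX2sec : ∀ x (hx : x ∉ D), X2 x → ∃ d', d' ∈ D ∧ G.Adj d' x ∧ d' ≠ dv x hx := by
    rintro x hx ⟨a, b, hab, ha, hb, haadj, hbadj⟩
    by_cases hA : a = dv x hx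
    · exact ⟨b, hb, hbadj, fun h => hab (hA.trans h.symm)⟩
    · exact ⟨a, ha, haadj, hA⟩
  choose d2 hd2D hd2Adj hd2ne using hX2sec
  -- an X1 vertex has a neighbor outside D
  have hX1nbr : ∀ x, x ∉ D → ¬ X2 x → ∃ w, w ∉ D ∧ G.Adj x w := by
    intro x hx h2
    by_contra hno
    push_neg at hno
    have hsub : G.neighborSet x = {dv x hx} := by
      ext y
      simp only [mem_neighborSet, Set.mem_singleton_iff]
      constructor
      · intro hy
        have hyD : y ∈ D := by
          by_contra hyD
          exact hno y hyD hy
        by_contra hne'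
        exact h2 ⟨y, dv x hx, hne', hyD, hdvD x hx, hy.symm, hdvAdj x hx⟩
      · rintro rfl; exact (hdvAdj x hx).symm
    exact hx (hpendant x (by rw [hsub]; simp))
  -- max cut
  obtain ⟨f, hfmax⟩ : ∃ f : V → Bool, ∀ g : V → Bool,
      ((Finset.univ.filter (fun p : V × V => p.1 ∉ D ∧ p.2 ∉ D ∧ ¬X2 p.1 ∧ ¬X2 p.2 ∧
        G.Adj p.1 p.2 ∧ g p.1 ≠ g p.2)).card) ≤
      ((Finset.univ.filter (fun p : V × V => p.1 ∉ D ∧ p.2 ∉ D ∧ ¬X2 p.1 ∧ ¬X2 p.2 ∧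
        G.Adj p.1 p.2 ∧ f p.1 ≠ f p.2)).card) := by
    obtain ⟨f, -, hf⟩ := Finset.exists_max_image (Finset.univ : Finset (V → Bool))
      (fun f => ((Finset.univ.filter (fun p : V × V => p.1 ∉ D ∧ p.2 ∉ D ∧ ¬X2 p.1 ∧ ¬X2 p.2 ∧
        G.Adj p.1 p.2 ∧ f p.1 ≠ f p.2)).card)) ⟨fun _ => true, Finset.mem_univ _⟩
    exact ⟨f, fun g => hf g (Finset.mem_univ g)⟩
  have hcut : ∀ x, x ∉ D → ¬ X2 x → ∃ w, w ∉ D ∧ G.Adj x w ∧ (X2 w ∨ f w ≠ f x) := by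
    intro x hx h2
    obtain ⟨w₀, hw₀D, hw₀adj⟩ := hX1nbr x hx h2
    by_contra hbad
    push_neg at hbad
    have hbad' : ∀ w, w ∉ D → G.Adj x w → ¬ X2 w ∧ f w = f x := by
      intro w h1 h2'
      obtain ⟨hb1, hb2⟩ := hbad w h1 h2'
      exact ⟨hb1, hb2⟩
    set g := Function.update f x (!f x) with hg
    have hgx : g x = !f x := by rw [hg]; simp
    have hgy : ∀ y, y ≠ x → g y = f y := by intro y hy; rw [hg]; simp [Function.update_of_ne hy]
    have hsub : (Finset.univ.filter (fun p : V × V => p.1 ∉ D ∧ p.2 ∉ D ∧ ¬X2 p.1 ∧ ¬X2 p.2 ∧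
        G.Adj p.1 p.2 ∧ f p.1 ≠ f p.2)) ⊆ (Finset.univ.filter (fun p : V × V => p.1 ∉ D ∧ p.2 ∉ D ∧
        ¬X2 p.1 ∧ ¬X2 p.2 ∧ G.Adj p.1 p.2 ∧ g p.1 ≠ g p.2)) := by
      intro p hp
      simp only [Finset.mem_filter, Finset.mem_univ, true_and] at hp ⊢
      obtain ⟨h1, h2', h3, h4, h5, h6⟩ := hp
      refine ⟨h1, h2', h3, h4, h5, ?_⟩
      by_cases e1 : p.1 = x
      · have e2 : p.2 ≠ x := by rintro rfl; exact G.loopless.irrefl _ (e1 ▸ h5)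
        have hfp2 : f p.2 = f x := (hbad' p.2 h2' (e1 ▸ h5)).2
        rw [e1, hgx, hgy _ e2, hfp2]
        simp
      · by_cases e2 : p.2 = x
        · have hfp1 : f p.1 = f x := (hbad' p.1 h1 ((e2 ▸ h5).symm)).2
          rw [e2, hgx, hgy _ e1, hfp1]
          simp
        · rw [hgy _ e1, hgy _ e2]; exact h6
    have hw₀X2 : ¬ X2 w₀ := (hbad' w₀ hw₀D hw₀adj).1
    have hw₀f : f w₀ = f x := (hbad' w₀ hw₀D hw₀adj).2
    have hw₀x : w₀ ≠ x := fun h => G.loopless.irrefl x (h ▸ hw₀adj)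
    have hmem1 : (x, w₀) ∈ (Finset.univ.filter (fun p : V × V => p.1 ∉ D ∧ p.2 ∉ D ∧ ¬X2 p.1 ∧
        ¬X2 p.2 ∧ G.Adj p.1 p.2 ∧ g p.1 ≠ g p.2)) := by
      simp only [Finset.mem_filter, Finset.mem_univ, true_and]
      refine ⟨hx, hw₀D, h2, hw₀X2, hw₀adj, ?_⟩
      rw [hgx, hgy _ hw₀x, hw₀f]
      simp
    have hmem2 : (x, w₀) ∉ (Finset.univ.filter (fun p : V × V => p.1 ∉ D ∧ p.2 ∉ D ∧ ¬X2 p.1 ∧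
        ¬X2 p.2 ∧ G.Adj p.1 p.2 ∧ f p.1 ≠ f p.2)) := by
      simp only [Finset.mem_filter, Finset.mem_univ, true_and, not_and]
      intro _ _ _ _ _
      rw [hw₀f]
      simp
    have hss := Finset.card_lt_card ⟨hsub, fun hsup => hmem2 (hsup hmem1)⟩
    exact absurd (hfmax g) (not_le.mpr hss)
  -- the three new colors
  obtain ⟨A, Bc, Cc, hAv, hBv, hCv⟩ :
      ∃ a b c : Fin (k + 3), (a : ℕ) = k ∧ (b : ℕ) = k + 1 ∧ (c : ℕ) = k + 2 :=
    ⟨⟨k, by omega⟩, ⟨k + 1, by omega⟩, ⟨k + 2, by omega⟩, rfl, rfl, rfl⟩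
  have hABne : A ≠ Bc := fun h => by rw [h] at hAv; omega
  -- the two colour functions
  obtain ⟨fcol, ncol, hfcA, hncA, hfge, hnge, hfn, hff⟩ :
      ∃ fc nc : V → Fin (k + 3),
        (∀ x, fc x = A ∨ fc x = Bc) ∧ (∀ x, nc x = A ∨ nc x = Bc) ∧
        (∀ x, k ≤ (fc x : ℕ) ∧ (fc x : ℕ) ≤ k + 1) ∧
        (∀ x, k ≤ (nc x : ℕ) ∧ (nc x : ℕ) ≤ k + 1) ∧
        (∀ x y, f x = f y → fc x ≠ nc y) ∧
        (∀ x y, f x ≠ f y → fc x ≠ fc y) := by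
    refine ⟨fun x => if f x then A else Bc, fun x => if f x then Bc else A,
      fun x => by by_cases h : f x <;> simp [h],
      fun x => by by_cases h : f x <;> simp [h],
      fun x => by by_cases h : f x <;> simp [h] <;> omega,
      fun x => by by_cases h : f x <;> simp [h] <;> omega, ?_, ?_⟩
    · intro x y hxy
      show (if f x = true then A else Bc) ≠ (if f y = true then Bc else A)
      rw [hxy]
      cases hy' : f y
      · simp only [Bool.false_eq_true, if_neg, reduceIte]
        exact hABne.symm
      · simp only [reduceIte]
        exact hABne
    · intro x y hxy
      show (if f x = true then A else Bc) ≠ (if f y = true then A else Bc)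
      cases hx' : f x <;> cases hy' : f y
      · exact absurd (hx'.trans hy'.symm) hxy
      · simpa using hABne.symm
      · simpa using hABne
      · exact absurd (hx'.trans hy'.symm) hxy
  -- the mixed-edge colour
  obtain ⟨mcol, hm1, hm2, hmor⟩ :
      ∃ mc : (x d : V) → x ∉ D → Fin (k + 3),
        (∀ x (hx : x ∉ D), mc x (dv x hx) hx = fcol x) ∧
        (∀ x (hx : x ∉ D) (h2 : X2 x), mc x (d2 x hx h2) hx = ncol x) ∧
        (∀ x d (hx : x ∉ D), mc x d hx = fcol x ∨ mc x d hx = ncol x) := by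
    refine ⟨fun x d hx => if h2 : X2 x then (if d = d2 x hx h2 then ncol x else fcol x)
      else fcol x, ?_, ?_, ?_⟩
    · intro x hx
      dsimp only
      by_cases h2 : X2 x
      · rw [dif_pos h2, if_neg (fun hEq => hd2ne x hx h2 hEq.symm)]
      · rw [dif_neg h2]
    · intro x hx h2
      dsimp only
      rw [dif_pos h2, if_pos rfl]
    · intro x d hx
      dsimp only
      by_cases h2 : X2 x
      · rw [dif_pos h2]
        split
        · right; rfl
        · left; rfl
      · rw [dif_neg h2]; left; rfl
  -- the global colouring
  obtain ⟨c', hcOld, hcMix, hcMix2, hcOut⟩ :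
      ∃ c' : Sym2 V → Fin (k + 3),
        (∀ a b : ↥D, c' s(a.1, b.1) = Fin.castLE (by omega) (c₀ s(a, b))) ∧
        (∀ x d (hx : x ∉ D), d ∈ D → c' s(x, d) = mcol x d hx) ∧
        (∀ x d (hx : x ∉ D), d ∈ D → c' s(d, x) = mcol x d hx) ∧
        (∀ x y, x ∉ D → y ∉ D → c' s(x, y) = Cc) := by
    have hsymm : ∀ a b : V,
        (if ha : a ∈ D then
          (if hb : b ∈ D then Fin.castLE (by omega : k ≤ k + 3) (c₀ s(⟨a, ha⟩, ⟨b, hb⟩))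
           else mcol b a hb)
         else (if hb : b ∈ D then mcol a b ha else Cc)) =
        (if hb : b ∈ D then
          (if ha : a ∈ D then Fin.castLE (by omega : k ≤ k + 3) (c₀ s(⟨b, hb⟩, ⟨a, ha⟩))
           else mcol a b ha)
         else (if ha : a ∈ D then mcol b a hb else Cc)) := by
      intro a b
      by_cases ha : a ∈ D <;> by_cases hb : b ∈ D
      · rw [dif_pos ha, dif_pos hb, dif_pos hb, dif_pos ha]
        congr 1
        rw [Sym2.eq_swap]
      · rw [dif_pos ha, dif_neg hb, dif_neg hb, dif_pos ha]
      · rw [dif_neg ha, dif_pos hb, dif_pos hb, dif_neg ha]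
      · rw [dif_neg ha, dif_neg hb, dif_neg hb, dif_neg ha]
    refine ⟨Sym2.lift ⟨fun a b =>
        (if ha : a ∈ D then
          (if hb : b ∈ D then Fin.castLE (by omega : k ≤ k + 3) (c₀ s(⟨a, ha⟩, ⟨b, hb⟩))
           else mcol b a hb)
         else (if hb : b ∈ D then mcol a b ha else Cc)), hsymm⟩, ?_, ?_, ?_, ?_⟩
    · intro a b
      rw [Sym2.lift_mk]
      dsimp only
      rw [dif_pos a.2, dif_pos b.2]
    · intro x d hx hd
      rw [Sym2.lift_mk]
      dsimp only
      rw [dif_neg hx, dif_pos hd]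
    · intro x d hx hd
      rw [Sym2.lift_mk]
      dsimp only
      rw [dif_pos hd, dif_neg hx]
    · intro x y hx hy
      rw [Sym2.lift_mk]
      dsimp only
      rw [dif_neg hx, dif_neg hy]
  have hmix_ge : ∀ x d (hx : x ∉ D), k ≤ (mcol x d hx : ℕ) ∧ (mcol x d hx : ℕ) ≤ k + 1 := by
    intro x d hx
    rcases hmor x d hx with h | h <;> rw [h]
    · exact hfge x
    · exact hnge x
  -- rainbow walks inside D
  have Dwalk : ∀ (d₁ d₂ : V) (h₁ : d₁ ∈ D) (h₂ : d₂ ∈ D), ∃ p : G.Walk d₁ d₂,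
      (p.edges.map c').Nodup ∧ ∀ x ∈ p.edges.map c', (x : ℕ) < k := by
    intro d₁ d₂ h₁ h₂
    by_cases he : (⟨d₁, h₁⟩ : ↥D) = ⟨d₂, h₂⟩
    · have hd : d₁ = d₂ := congrArg Subtype.val he
      subst hd
      exact ⟨Walk.nil, by simp, by simp⟩
    · obtain ⟨q, hq, hq2⟩ := H₀ _ _ he
      let hom : G.induce D →g G := ⟨Subtype.val, fun {a b} h => h⟩
      refine ⟨q.map hom, ?_, ?_⟩
      · rw [Walk.edges_map, List.map_map]
        have hpt : ∀ e ∈ q.edges, (c' ∘ Sym2.map hom) e =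
            ((Fin.castLE (by omega : k ≤ k + 3)) ∘ c₀) e := by
          intro e he'
          induction e using Sym2.ind with
          | _ a b =>
            simp only [Function.comp_apply, Sym2.map_pair_eq]
            exact hcOld a b
        rw [List.map_congr_left hpt, ← List.map_map]
        exact List.Nodup.map (Fin.castLE_injective _) hq2
      · rw [Walk.edges_map, List.map_map]
        intro x hx
        obtain ⟨e, he', rfl⟩ := List.mem_map.mp hx
        induction e using Sym2.ind with
        | _ a b =>
          simp only [Function.comp_apply, Sym2.map_pair_eq]
          have heq : (c' s((⇑hom) a, (⇑hom) b)) = Fin.castLE (by omega : k ≤ k + 3) (c₀ s(a, b)) :=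
            hcOld a b
          rw [heq]
          simpa using (c₀ s(a, b)).isLt
  -- convert rainbow walks to rainbow paths
  have toP : ∀ (u v : V), (∃ w : G.Walk u v, (w.edges.map c').Nodup) →
      ∃ p : G.Walk u v, p.IsPath ∧ (p.edges.map c').Nodup := by
    rintro u v ⟨w, hw⟩
    refine ⟨w.bypass, w.bypass_isPath, ?_⟩
    refine List.Nodup.map_on ?_ w.bypass_isPath.edges_nodup
    intro x hx y hy hxy
    exact List.inj_on_of_nodup_map hw (w.edges_bypass_subset hx) (w.edges_bypass_subset hy) hxy
  -- two short legs
  have glue2 : ∀ (u v du dv' : V), u ∉ D → v ∉ D → du ∈ D → dv' ∈ D →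
      ∀ (h1 : G.Adj u du) (h2 : G.Adj dv' v), c' s(u, du) ≠ c' s(dv', v) →
      ∃ w : G.Walk u v, (w.edges.map c').Nodup := by
    intro u v du dv' hu hv hdu hdv h1 h2 hne'
    obtain ⟨P, hP1, hP2⟩ := Dwalk du dv' hdu hdv
    refine ⟨Walk.cons h1 (P.append (Walk.cons h2 Walk.nil)), ?_⟩
    simp only [Walk.edges_cons, Walk.edges_append, Walk.edges_nil, List.map_cons,
      List.map_append, List.map_nil]
    have g1 : k ≤ ((c' s(u, du)) : ℕ) := by
      rw [hcMix u du hu hdu]; exact (hmix_ge u du hu).1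
    have g2 : k ≤ ((c' s(dv', v)) : ℕ) := by
      rw [hcMix2 v dv' hv hdv]; exact (hmix_ge v dv' hv).1
    exact nodup_list_aux1 hP1 hP2 g1 g2 hne'
  -- long leg at u, short leg at v
  have glue3 : ∀ (u v w dw dv' : V), u ∉ D → v ∉ D → w ∉ D → dw ∈ D → dv' ∈ D →
      ∀ (h0 : G.Adj u w) (h1 : G.Adj w dw) (h2 : G.Adj dv' v),
      c' s(w, dw) ≠ c' s(dv', v) →
      ∃ p : G.Walk u v, (p.edges.map c').Nodup := by
    intro u v w dw dv' hu hv hw hdw hdv h0 h1 h2 hne'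
    obtain ⟨P, hP1, hP2⟩ := Dwalk dw dv' hdw hdv
    refine ⟨Walk.cons h0 (Walk.cons h1 (P.append (Walk.cons h2 Walk.nil))), ?_⟩
    simp only [Walk.edges_cons, Walk.edges_append, Walk.edges_nil, List.map_cons,
      List.map_append, List.map_nil]
    have e0 : c' s(u, w) = Cc := hcOut u w hu hw
    have g1 : k ≤ ((c' s(w, dw)) : ℕ) ∧ ((c' s(w, dw)) : ℕ) ≤ k + 1 := by
      rw [hcMix w dw hw hdw]; exact hmix_ge w dw hw
    have g2 : k ≤ ((c' s(dv', v)) : ℕ) ∧ ((c' s(dv', v)) : ℕ) ≤ k + 1 := by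
      rw [hcMix2 v dv' hv hdv]; exact hmix_ge v dv' hv
    refine nodup_list_aux2 hP1 hP2 (by rw [e0, hCv]; omega) g1.1 g2.1 ?_ ?_ hne'
    · intro h
      rw [e0] at h
      have := congrArg Fin.val h
      rw [hCv] at this
      omega
    · intro h
      rw [e0] at h
      have := congrArg Fin.val h
      rw [hCv] at this
      omega
  -- final assembly
  refine ⟨c', ?_⟩
  intro u v huv
  by_cases hu : u ∈ D <;> by_cases hv : v ∈ D
  · obtain ⟨P, hP1, hP2⟩ := Dwalk u v hu hv
    exact toP u v ⟨P, hP1⟩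
  · obtain ⟨P, hP1, hP2⟩ := Dwalk u (dv v hv) hu (hdvD v hv)
    refine toP u v ⟨P.append (Walk.cons (hdvAdj v hv) Walk.nil), ?_⟩
    simp only [Walk.edges_append, Walk.edges_cons, Walk.edges_nil, List.map_append,
      List.map_cons, List.map_nil]
    refine nodup_append_aux hP1 (List.nodup_singleton _) hP2 ?_
    intro x hx
    simp only [List.mem_singleton] at hx
    subst hx
    rw [hcMix2 v (dv v hv) hv (hdvD v hv)]
    exact (hmix_ge v (dv v hv) hv).1
  · obtain ⟨P, hP1, hP2⟩ := Dwalk (dv u hu) v (hdvD u hu) hv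
    refine toP u v ⟨Walk.cons (hdvAdj u hu).symm P, ?_⟩
    simp only [Walk.edges_cons, List.map_cons]
    refine nodup_list_aux0 hP1 hP2 ?_
    rw [hcMix u (dv u hu) hu (hdvD u hu)]
    exact (hmix_ge u (dv u hu) hu).1
  · by_cases hfuv : f u = f v
    · by_cases h2u : X2 u
      · refine toP u v (glue2 u v (d2 u hu h2u) (dv v hv) hu hv (hd2D u hu h2u) (hdvD v hv)
          (hd2Adj u hu h2u).symm (hdvAdj v hv) ?_)
        rw [hcMix u _ hu (hd2D u hu h2u), hcMix2 v _ hv (hdvD v hv), hm2 u hu h2u, hm1 v hv]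
        exact (hfn v u hfuv.symm).symm
      · by_cases h2v : X2 v
        · refine toP u v (glue2 u v (dv u hu) (d2 v hv h2v) hu hv (hdvD u hu) (hd2D v hv h2v)
            (hdvAdj u hu).symm (hd2Adj v hv h2v) ?_)
          rw [hcMix u _ hu (hdvD u hu), hcMix2 v _ hv (hd2D v hv h2v), hm1 u hu, hm2 v hv h2v]
          exact hfn u v hfuv
        · obtain ⟨w, hwD, hwadj, hwor⟩ := hcut u hu h2u
          by_cases hfw : f w = f u
          · have h2w : X2 w := by
              rcases hwor with h | h
              · exact h
              · exact absurd hfw h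
            refine toP u v (glue3 u v w (d2 w hwD h2w) (dv v hv) hu hv hwD (hd2D w hwD h2w)
              (hdvD v hv) hwadj (hd2Adj w hwD h2w).symm (hdvAdj v hv) ?_)
            rw [hcMix w _ hwD (hd2D w hwD h2w), hcMix2 v _ hv (hdvD v hv), hm2 w hwD h2w,
              hm1 v hv]
            exact (hfn v w (hfuv.symm.trans hfw.symm)).symm
          · refine toP u v (glue3 u v w (dv w hwD) (dv v hv) hu hv hwD (hdvD w hwD)
              (hdvD v hv) hwadj (hdvAdj w hwD).symm (hdvAdj v hv) ?_)
            rw [hcMix w _ hwD (hdvD w hwD), hcMix2 v _ hv (hdvD v hv), hm1 w hwD, hm1 v hv]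
            exact hff w v (fun h => hfw (h.trans hfuv.symm))
    · refine toP u v (glue2 u v (dv u hu) (dv v hv) hu hv (hdvD u hu) (hdvD v hv)
        (hdvAdj u hu).symm (hdvAdj v hv) ?_)
      rw [hcMix u _ hu (hdvD u hu), hcMix2 v _ hv (hdvD v hv), hm1 u hu, hm1 v hv]
      exact hff u v hfuv
end
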